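/- arXiv:1109.4673 — 5 statements merged into one kernel-verified Lean document; each statement's English description precedes it below -/
import Mathlib

section
/- If G is a tree on an odd number n of vertices containing a vertex of degree at least 4, or containing two nonadjacent vertices each of degree 3, then T(G) < 1. -/
open SimpleGraph

/-- Number of connected components `ω(G)`. -/
noncomputable def SimpleGraph.omegaComp {W : Type*} (G : SimpleGraph W) : ℕ :=
  Nat.card G.ConnectedComponent

/-- Order `τ(G)` of a largest connected component of `G`. -/
noncomputable def SimpleGraph.tauMax {W : Type*} (G : SimpleGraph W) : ℕ :=
  sSup (Set.range fun c : G.ConnectedComponent =>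
    Nat.card {v : W // G.connectedComponentMk v = c})

/-- The graph `G - X` obtained by deleting the vertices of `X`. -/
def SimpleGraph.delVerts {V : Type*} (G : SimpleGraph V) (X : Finset V) :
    SimpleGraph {v : V // v ∉ X} :=
  SimpleGraph.comap Subtype.val G

/-- `X` is a vertex cut of `G`: deleting `X` leaves more than one component. -/
def SimpleGraph.IsVertexCut {V : Type*} (G : SimpleGraph V) (X : Finset V) : Prop :=
  1 < (G.delVerts X).omegaComp

/-- The tenacity `T(G) = min over vertex cuts X of (|X| + τ(G−X)) / ω(G−X)`. -/
noncomputable def SimpleGraph.tenacity {V : Type*} [Fintype V] (G : SimpleGraph V) : ℝ :=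
  sInf { t : ℝ | ∃ X : Finset V, G.IsVertexCut X ∧
    t = ((X.card : ℝ) + (G.delVerts X).tauMax) / (G.delVerts X).omegaComp }

/-- Vertex degree via `Nat.card` (no decidability assumptions needed). -/
noncomputable def SimpleGraph.deg {V : Type*} (G : SimpleGraph V) (v : V) : ℕ :=
  Nat.card (G.neighborSet v)

/-- A unicyclic graph: connected with as many edges as vertices. -/
def SimpleGraph.Unicyclic {V : Type*} [Fintype V] (G : SimpleGraph V) : Prop :=
  G.Connected ∧ Nat.card G.edgeSet = Fintype.card V

open Finset

section AuxTenacity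

variable {V : Type*} [DecidableEq V] {G : SimpleGraph V}

/-- Subwalk extraction from a walk, between positions `i ≤ j`. -/
lemma subwalk_exists : ∀ {x y : V} (W : G.Walk x y) (i j : ℕ), i ≤ j → j ≤ W.length →
    ∃ q : G.Walk (W.getVert i) (W.getVert j), q.length = j - i ∧ (W.IsPath → q.IsPath) ∧
      ∀ z ∈ q.support, ∃ nn, i ≤ nn ∧ nn ≤ j ∧ z = W.getVert nn := by
  intro x y W
  induction W with
  | nil =>
    intro i j hij hj
    simp only [SimpleGraph.Walk.length_nil, Nat.le_zero] at hj
    subst hj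
    simp only [Nat.le_zero] at hij; subst hij
    refine ⟨Walk.nil, by simp, fun _ => by simp, ?_⟩
    intro z hz
    simp only [Walk.support_nil, List.mem_singleton] at hz
    exact ⟨0, le_rfl, le_rfl, by simpa using hz⟩
  | @cons a b c h W' ih =>
    intro i j hij hj
    match i, j with
    | 0, 0 =>
      refine ⟨Walk.nil, by simp, fun _ => by simp, ?_⟩
      intro z hz
      simp only [Walk.support_nil, List.mem_singleton] at hz
      exact ⟨0, le_rfl, le_rfl, by simpa using hz⟩
    | 0, (jj+1) =>
      have hjj : jj ≤ W'.length := by simpa [Nat.succ_le_succ_iff] using hj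
      obtain ⟨q', hlen, hpath, hsupp⟩ := ih 0 jj (Nat.zero_le _) hjj
      change ∃ q : G.Walk a (W'.getVert jj), q.length = jj + 1 - 0 ∧ ((Walk.cons h W').IsPath → q.IsPath) ∧
        ∀ z ∈ q.support, ∃ nn, 0 ≤ nn ∧ nn ≤ jj + 1 ∧ z = (Walk.cons h W').getVert nn
      refine ⟨Walk.cons h (q'.copy (Walk.getVert_zero W') rfl), ?_, ?_, ?_⟩
      · simp [hlen]
      · intro hP
        rw [Walk.cons_isPath_iff] at hP ⊢
        refine ⟨by simpa using hpath hP.1, ?_⟩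
        rw [Walk.support_copy]
        intro hmem
        obtain ⟨nn, _, hnn2, hz⟩ := hsupp _ hmem
        exact hP.2 (Walk.mem_support_iff_exists_getVert.2 ⟨nn, hz.symm, hnn2.trans hjj⟩)
      · intro z hz
        rw [Walk.support_cons, List.mem_cons] at hz
        rcases hz with rfl | hz
        · exact ⟨0, le_rfl, Nat.zero_le _, rfl⟩
        · rw [Walk.support_copy] at hz
          obtain ⟨nn, _, hnn2, hzz⟩ := hsupp _ hz
          exact ⟨nn + 1, Nat.zero_le _, Nat.succ_le_succ hnn2, hzz⟩
    | (ii+1), (jj+1) =>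
      have hjj : jj ≤ W'.length := by simpa [Nat.succ_le_succ_iff] using hj
      obtain ⟨q', hlen, hpath, hsupp⟩ := ih ii jj (Nat.succ_le_succ_iff.1 hij) hjj
      refine ⟨q', by simpa using hlen, fun hP => hpath ((Walk.cons_isPath_iff h W').1 hP).1, ?_⟩
      intro z hz
      obtain ⟨nn, hnn1, hnn2, hzz⟩ := hsupp _ hz
      exact ⟨nn + 1, Nat.succ_le_succ hnn1, Nat.succ_le_succ hnn2, hzz⟩

/-- In a path, distinct positions give distinct vertices. -/
lemma path_getVert_ne (hT : G.IsTree) {x y : V} {W : G.Walk x y} (hW : W.IsPath) {i j : ℕ}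
    (hij : i < j) (hj : j ≤ W.length) : W.getVert i ≠ W.getVert j := by
  obtain ⟨q, hlen, hpath, _⟩ := subwalk_exists W i j hij.le hj
  intro hEq
  have hq : (q.copy hEq rfl).IsPath := by rw [Walk.isPath_copy]; exact hpath hW
  rw [Walk.isPath_iff_eq_nil] at hq
  have : (q.copy hEq rfl).length = 0 := by rw [hq]; rfl
  rw [Walk.length_copy] at this
  omega

/-- In a tree, vertices at distance ≥ 2 along a path are non-adjacent. -/
lemma path_getVert_not_adj (hT : G.IsTree) {x y : V} {W : G.Walk x y} (hW : W.IsPath) {i j : ℕ}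
    (hij : i + 2 ≤ j) (hj : j ≤ W.length) : ¬ G.Adj (W.getVert i) (W.getVert j) := by
  intro hadj
  obtain ⟨q, hlen, hpath, _⟩ := subwalk_exists W i j (by omega) hj
  have h1 : (Walk.cons hadj Walk.nil).IsPath := by
    simp [Walk.cons_isPath_iff, hadj.ne]
  have := (hT.existsUnique_path _ _).unique (hpath hW) h1
  have : q.length = 1 := by rw [this]; simp
  omega

/-- A neighbor of the start of a path which lies on the path's support is the second vertex. -/
lemma nbr_on_path (hT : G.IsTree) {x y z : V} {W : G.Walk x y} (hW : W.IsPath)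
    (hadj : G.Adj x z) (hz : z ∈ W.support) : z = W.getVert 1 := by
  obtain ⟨n, hn, hnle⟩ := Walk.mem_support_iff_exists_getVert.1 hz
  rcases Nat.lt_or_ge n 2 with h2 | h2
  · interval_cases n
    · rw [Walk.getVert_zero] at hn; subst hn; exact absurd hadj (G.irrefl)
    · exact hn.symm
  · exfalso
    have := path_getVert_not_adj hT hW (i := 0) (j := n) (by omega) hnle
    rw [Walk.getVert_zero, hn] at this
    exact this hadj

lemma isPath_concat {x y z : V} {W : G.Walk x y} (hW : W.IsPath) (h : G.Adj y z)
    (hz : z ∉ W.support) : (W.concat h).IsPath := by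
  rw [← Walk.isPath_reverse_iff, Walk.reverse_concat, Walk.cons_isPath_iff]
  exact ⟨hW.reverse, by rwa [Walk.support_reverse, List.mem_reverse]⟩

/-- Elimination lemma: in a tree, given a "path-connected" subset `s'` of `t` and
`t \ s'` nonempty, there is a vertex of `t` outside `s'` with at most one neighbor in `t`. -/
lemma elim_lemma (hT : G.IsTree) (r : V) (s' t : Finset V)
    (hpc : ∀ x ∈ s', ∃ w : G.Walk r x, ∀ z ∈ w.support, z ∈ s')
    (hsub : s' ⊆ t) (hne : (t \ s').Nonempty) :
    ∃ u ∈ t, u ∉ s' ∧ ∃ w0, ∀ y ∈ t, G.Adj u y → y = w0 := by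
  classical
  set dd : V → ℕ := fun v => (hT.existsUnique_path r v).choose.length with hdd
  obtain ⟨u, hu, hmax⟩ := Finset.exists_max_image (t \ s') dd hne
  rw [Finset.mem_sdiff] at hu
  set Pu := (hT.existsUnique_path r u).choose with hPu
  have hPupath : Pu.IsPath := (hT.existsUnique_path r u).choose_spec.1
  refine ⟨u, hu.1, hu.2, Pu.getVert (Pu.length - 1), ?_⟩
  intro y hy hadj
  by_cases hys : y ∈ Pu.support
  · have h1 : y ∈ Pu.reverse.support := by rwa [Walk.support_reverse, List.mem_reverse]
    have := nbr_on_path hT hPupath.reverse hadj h1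
    rwa [Walk.getVert_reverse] at this
  · exfalso
    have hQ : (Pu.concat hadj).IsPath := isPath_concat hPupath hadj hys
    have hQeq : Pu.concat hadj = (hT.existsUnique_path r y).choose :=
      ((hT.existsUnique_path r y).choose_spec.2 _ hQ).symm ▸ rfl
    have hdy : dd y = Pu.length + 1 := by
      rw [hdd]
      simp only
      rw [← hQeq, Walk.length_concat]
    by_cases hyS : y ∈ s'
    · obtain ⟨Wy, hWy⟩ := hpc y hyS
      have : (Wy.toPath : G.Walk r y) = (hT.existsUnique_path r y).choose :=
        (hT.existsUnique_path r y).choose_spec.2 _ (Wy.toPath.2)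
      have hu_in : u ∈ ((Wy.toPath : G.Walk r y)).support := by
        rw [this, ← hQeq]
        rw [Walk.support_concat]
        simp [List.concat_eq_append]
      exact hu.2 (hWy u (Walk.support_toPath_subset _ hu_in))
    · have hyts : y ∈ t \ s' := Finset.mem_sdiff.2 ⟨hy, hyS⟩
      have := hmax y hyts
      rw [hdy] at this
      have : dd u = Pu.length := rfl
      omega

/-- Separation of two blocks: distinct and non-adjacent elements. -/
def BSep (G : SimpleGraph V) (b b' : Finset V) : Prop :=
  ∀ x ∈ b, ∀ y ∈ b', x ≠ y ∧ ¬ G.Adj x y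

lemma BSep.symm' {b b' : Finset V} (h : BSep G b b') : BSep G b' b := fun x hx y hy =>
  ⟨(h y hy x hx).1.symm, fun ha => (h y hy x hx).2 ha.symm⟩

/-- A valid family of blocks inside `t`: each block is a single vertex or an edge,
blocks are pairwise separated. -/
def BlocksOn (G : SimpleGraph V) (t : Finset V) (B : Finset (Finset V)) : Prop :=
  (∀ b ∈ B, b ⊆ t) ∧
  (∀ b ∈ B, (∃ x, b = {x}) ∨ (∃ x y, x ≠ y ∧ G.Adj x y ∧ b = {x, y})) ∧
  (∀ b ∈ B, ∀ b' ∈ B, b ≠ b' → BSep G b b')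

def score (B : Finset (Finset V)) : ℕ := ∑ b ∈ B, (b.card + 1)

lemma block_nonempty {t : Finset V} {B : Finset (Finset V)} (hB : BlocksOn G t B)
    {b : Finset V} (hb : b ∈ B) : b.Nonempty := by
  rcases hB.2.1 b hb with ⟨x, rfl⟩ | ⟨x, y, _, _, rfl⟩ <;> simp [Finset.insert_nonempty]

lemma block_card_le {t : Finset V} {B : Finset (Finset V)} (hB : BlocksOn G t B)
    {b : Finset V} (hb : b ∈ B) : b.card ≤ 2 := by
  rcases hB.2.1 b hb with ⟨x, rfl⟩ | ⟨x, y, _, _, rfl⟩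
  · simp
  · exact (Finset.card_insert_le _ _).trans (by simp)

lemma blocksOn_mono {t t' : Finset V} (hsub : t ⊆ t') {B : Finset (Finset V)}
    (hB : BlocksOn G t B) : BlocksOn G t' B :=
  ⟨fun b hb => (hB.1 b hb).trans hsub, hB.2.1, hB.2.2⟩

lemma blocksOn_erase {t : Finset V} {B : Finset (Finset V)} (hB : BlocksOn G t B)
    (b0 : Finset V) : BlocksOn G t (B.erase b0) :=
  ⟨fun b hb => hB.1 b (Finset.mem_of_mem_erase hb),
   fun b hb => hB.2.1 b (Finset.mem_of_mem_erase hb),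
   fun b hb b' hb' => hB.2.2 b (Finset.mem_of_mem_erase hb) b' (Finset.mem_of_mem_erase hb')⟩

lemma blocksOn_insert {t : Finset V} {B : Finset (Finset V)} (hB : BlocksOn G t B)
    {b : Finset V} (hbt : b ⊆ t)
    (hstruct : (∃ x, b = {x}) ∨ (∃ x y, x ≠ y ∧ G.Adj x y ∧ b = {x, y}))
    (hsep : ∀ b' ∈ B, BSep G b b') : BlocksOn G t (insert b B) := by
  refine ⟨?_, ?_, ?_⟩
  · intro c hc; rcases Finset.mem_insert.1 hc with rfl | hc
    · exact hbt
    · exact hB.1 c hc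
  · intro c hc; rcases Finset.mem_insert.1 hc with rfl | hc
    · exact hstruct
    · exact hB.2.1 c hc
  · intro c hc c' hc' hne
    rcases Finset.mem_insert.1 hc with hceq | hcB
    · rcases Finset.mem_insert.1 hc' with hceq' | hcB'
      · exact absurd (hceq.trans hceq'.symm) hne
      · rw [hceq]; exact hsep c' hcB'
    · rcases Finset.mem_insert.1 hc' with hceq' | hcB'
      · rw [hceq']; exact (hsep c hcB).symm'
      · exact hB.2.2 c hcB c' hcB' hne

lemma blocksOn_union {t : Finset V} {B1 B2 : Finset (Finset V)}
    (hB1 : BlocksOn G t B1) (hB2 : BlocksOn G t B2)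
    (hsep : ∀ b ∈ B1, ∀ b' ∈ B2, BSep G b b') :
    BlocksOn G t (B1 ∪ B2) ∧ score (B1 ∪ B2) = score B1 + score B2 := by
  have hdisj : Disjoint B1 B2 := by
    rw [Finset.disjoint_left]
    intro b hb1 hb2
    obtain ⟨x, hx⟩ := block_nonempty hB1 hb1
    exact (hsep b hb1 b hb2 x hx x hx).1 rfl
  constructor
  · refine ⟨?_, ?_, ?_⟩
    · intro c hc; rcases Finset.mem_union.1 hc with hc | hc
      · exact hB1.1 c hc
      · exact hB2.1 c hc
    · intro c hc; rcases Finset.mem_union.1 hc with hc | hc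
      · exact hB1.2.1 c hc
      · exact hB2.2.1 c hc
    · intro c hc c' hc' hne
      rcases Finset.mem_union.1 hc with hc | hc <;> rcases Finset.mem_union.1 hc' with hc' | hc'
      · exact hB1.2.2 c hc c' hc' hne
      · exact hsep c hc c' hc'
      · exact (hsep c' hc' c hc).symm'
      · exact hB2.2.2 c hc c' hc' hne
  · exact Finset.sum_union hdisj

/-- The key move: adding a vertex `u` with at most one neighbor in `t` increases the score. -/
lemma move_lemma {t : Finset V} {u : V} (hu : u ∈ t) {w0 : V}
    (hnb : ∀ y ∈ t, G.Adj u y → y = w0)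
    {B : Finset (Finset V)} (hB : BlocksOn G (t.erase u) B) :
    ∃ B', BlocksOn G t B' ∧ score B + 1 ≤ score B' := by
  have herase : ∀ b ∈ B, ∀ x ∈ b, x ∈ t ∧ x ≠ u := by
    intro b hb x hx
    have := hB.1 b hb hx
    exact ⟨Finset.mem_of_mem_erase this, Finset.ne_of_mem_erase this⟩
  have hBt : BlocksOn G t B := blocksOn_mono (Finset.erase_subset u t) hB
  by_cases hA : ∃ b ∈ B, ∃ w ∈ b, G.Adj u w
  · obtain ⟨b0, hb0, w, hwb0, hadjw⟩ := hA
    have hwu : w ≠ u := (herase b0 hb0 w hwb0).2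
    have hkey : ∀ y ∈ t, y ≠ u → G.Adj u y → y = w := by
      intro y hy _ ha
      rw [hnb y hy ha, ← hnb w (herase b0 hb0 w hwb0).1 hadjw]
    have hsep_er : ∀ b' ∈ B.erase b0, ∀ z ∈ b0, BSep G ({z} : Finset V) b' := by
      intro b' hb' z hz x' hx' y' hy'
      rw [Finset.mem_singleton.1 hx']
      exact hB.2.2 b0 hb0 b' (Finset.mem_of_mem_erase hb')
        (Finset.ne_of_mem_erase hb').symm z hz y' hy'
    rcases hB.2.1 b0 hb0 with ⟨x, hx⟩ | ⟨x, y, hxy, hadjxy, hxyb⟩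
    · -- b0 is the singleton {w}
      have hxw : w = x := by rw [hx] at hwb0; simpa using hwb0
      subst hxw
      refine ⟨insert ({u, w} : Finset V) (B.erase b0), ?_, ?_⟩
      · refine blocksOn_insert (blocksOn_erase hBt b0) ?_
          (Or.inr ⟨u, w, fun h => hwu h.symm, hadjw, rfl⟩) ?_
        · intro z hz
          rcases Finset.mem_insert.1 hz with rfl | hz
          · exact hu
          · rw [Finset.mem_singleton.1 hz]; exact (herase b0 hb0 w hwb0).1
        · intro b' hb' z hz y' hy'
          have hb'B : b' ∈ B := Finset.mem_of_mem_erase hb'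
          have hy'te := herase b' hb'B y' hy'
          rcases Finset.mem_insert.1 hz with rfl | hz
          · refine ⟨fun h => hy'te.2 h.symm, fun ha => ?_⟩
            have hyw := hkey y' hy'te.1 hy'te.2 ha
            subst hyw
            exact (hsep_er b' hb' y' hwb0 y' (Finset.mem_singleton_self y') y' hy').1 rfl
          · rw [Finset.mem_singleton] at hz; subst hz
            exact hsep_er b' hb' z hwb0 z (Finset.mem_singleton_self z) y' hy'
      · have hnotmem : ({u, w} : Finset V) ∉ B.erase b0 := by
          intro hmem
          exact ((herase _ (Finset.mem_of_mem_erase hmem) u (by simp)).2) rfl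
        have h2 : ∑ b ∈ B.erase b0, (b.card + 1) + (b0.card + 1) = score B :=
          Finset.sum_erase_add B _ hb0
        have hcard : ({u, w} : Finset V).card = 2 := by
          rw [Finset.card_insert_of_notMem (fun h => hwu (Finset.mem_singleton.1 h).symm),
            Finset.card_singleton]
        have hb0card : b0.card = 1 := by rw [hx]; simp
        simp only [score, Finset.sum_insert hnotmem] at *
        omega
    · -- b0 is a pair containing w
      have hob : ∃ o, o ≠ w ∧ b0 = {w, o} := by
        rw [hxyb] at hwb0
        rcases Finset.mem_insert.1 hwb0 with rfl | hw
        · exact ⟨y, fun h => hxy h.symm, hxyb⟩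
        · rw [Finset.mem_singleton] at hw; subst hw
          exact ⟨x, hxy, by rw [hxyb, Finset.pair_comm]⟩
      obtain ⟨o, how, hb0eq⟩ := hob
      have hoinb0 : o ∈ b0 := by rw [hb0eq]; simp
      have hote := herase b0 hb0 o hoinb0
      have hBo : BlocksOn G t (insert ({o} : Finset V) (B.erase b0)) := by
        refine blocksOn_insert (blocksOn_erase hBt b0) (Finset.singleton_subset_iff.2 hote.1)
          (Or.inl ⟨o, rfl⟩) ?_
        intro b' hb'
        exact hsep_er b' hb' o hoinb0
      have hBuo : BlocksOn G t (insert ({u} : Finset V) (insert ({o} : Finset V) (B.erase b0))) := by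
        refine blocksOn_insert hBo (Finset.singleton_subset_iff.2 hu) (Or.inl ⟨u, rfl⟩) ?_
        intro b' hb' x' hx' y' hy'
        rw [Finset.mem_singleton] at hx'; subst hx'
        rcases Finset.mem_insert.1 hb' with rfl | hb'
        · rw [Finset.mem_singleton] at hy'; subst hy'
          exact ⟨fun h => hote.2 h.symm, fun ha => how ((hkey _ hote.1 hote.2 ha) ▸ rfl)⟩
        · have hy'te := herase b' (Finset.mem_of_mem_erase hb') y' hy'
          refine ⟨fun h => hy'te.2 h.symm, fun ha => ?_⟩
          have hyw := hkey y' hy'te.1 hy'te.2 ha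
          subst hyw
          exact (hsep_er b' hb' y' hwb0 y' (Finset.mem_singleton_self y') y' hy').1 rfl
      refine ⟨_, hBuo, ?_⟩
      have hno1 : ({o} : Finset V) ∉ B.erase b0 := by
        intro hmem
        have hne : ({o} : Finset V) ≠ b0 := by
          intro h
          have hw' : w ∈ ({o} : Finset V) := by rw [h, hb0eq]; simp
          exact how (Finset.mem_singleton.1 hw').symm
        exact (hB.2.2 _ (Finset.mem_of_mem_erase hmem) b0 hb0 hne o (by simp) o hoinb0).1 rfl
      have hno2 : ({u} : Finset V) ∉ insert ({o} : Finset V) (B.erase b0) := by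
        intro hmem
        rcases Finset.mem_insert.1 hmem with h | h
        · exact hote.2 (by
            have : u ∈ ({o} : Finset V) := by rw [← h]; simp
            exact (Finset.mem_singleton.1 this).symm)
        · exact (herase _ (Finset.mem_of_mem_erase h) u (by simp)).2 rfl
      have h2 : ∑ b ∈ B.erase b0, (b.card + 1) + (b0.card + 1) = score B :=
        Finset.sum_erase_add B _ hb0
      have hb0card : b0.card = 2 := by
        rw [hb0eq, Finset.card_insert_of_notMem (fun h => how (Finset.mem_singleton.1 h).symm),
          Finset.card_singleton]
      simp only [score, Finset.sum_insert hno2, Finset.sum_insert hno1, Finset.card_singleton] at *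
      omega
  · -- no neighbor of u in any block
    push_neg at hA
    refine ⟨insert ({u} : Finset V) B, ?_, ?_⟩
    · refine blocksOn_insert hBt (Finset.singleton_subset_iff.2 hu) (Or.inl ⟨u, rfl⟩) ?_
      intro b' hb' x' hx' y' hy'
      rw [Finset.mem_singleton] at hx'; subst hx'
      exact ⟨fun h => (herase b' hb' y' hy').2 h.symm, fun ha => hA b' hb' y' hy' ha⟩
    · have hno : ({u} : Finset V) ∉ B := by
        intro hmem
        exact (herase _ hmem u (by simp)).2 rfl
      simp only [score, Finset.sum_insert hno, Finset.card_singleton]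
      omega

/-- Shelling: blocks on a path-connected core `s'` extend to any `t ⊇ s'`, gaining 1 per vertex. -/
lemma shell_lemma (hT : G.IsTree) (r : V) (s' : Finset V)
    (hpc : ∀ x ∈ s', ∃ w : G.Walk r x, ∀ z ∈ w.support, z ∈ s')
    {B : Finset (Finset V)} (hB : BlocksOn G s' B) :
    ∀ N (t : Finset V), t.card ≤ N → s' ⊆ t →
      ∃ B', BlocksOn G t B' ∧ score B + (t.card - s'.card) ≤ score B' := by
  intro N
  induction N with
  | zero =>
    intro t ht hsub
    have ht0 : t = ∅ := Finset.card_eq_zero.1 (by omega)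
    subst ht0
    have : s' = ∅ := Finset.subset_empty.1 hsub
    subst this
    exact ⟨B, hB, by simp⟩
  | succ N ih =>
    intro t ht hsub
    by_cases hts : (t \ s').Nonempty
    · obtain ⟨u, hut, hus, w0, hnb⟩ := elim_lemma hT r s' t hpc hsub hts
      have hsub' : s' ⊆ t.erase u := fun z hz =>
        Finset.mem_erase.2 ⟨fun h => hus (h ▸ hz), hsub hz⟩
      have hupos : 1 ≤ t.card := Finset.card_pos.2 ⟨u, hut⟩
      have hcard : (t.erase u).card ≤ N := by
        rw [Finset.card_erase_of_mem hut]; omega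
      obtain ⟨B'', hB'', hs''⟩ := ih (t.erase u) hcard hsub'
      obtain ⟨B', hB', hs'⟩ := move_lemma hut hnb hB''
      refine ⟨B', hB', ?_⟩
      have h1 : s'.card ≤ (t.erase u).card := Finset.card_le_card hsub'
      rw [Finset.card_erase_of_mem hut] at h1 hs''
      omega
    · rw [Finset.not_nonempty_iff_eq_empty, Finset.sdiff_eq_empty_iff_subset] at hts
      have : t = s' := Finset.Subset.antisymm hts hsub
      subst this
      exact ⟨B, hB, by simp⟩

lemma blocksOn_empty {t : Finset V} : BlocksOn G t (∅ : Finset (Finset V)) :=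
  ⟨by simp, by simp, by simp⟩

lemma two_paths (hT : G.IsTree) {x y : V} {p q : G.Walk x y} (hp : p.IsPath) (hq : q.IsPath) :
    p = q := (hT.existsUnique_path x y).unique hp hq

lemma isPath2 {x y z : V} (h1 : G.Adj x y) (h2 : G.Adj y z) (hxz : x ≠ z) :
    (Walk.cons h1 (Walk.cons h2 Walk.nil)).IsPath := by
  simp [Walk.cons_isPath_iff, h2.ne, h1.ne, hxz]

lemma isPath3 {x y z w : V} (h1 : G.Adj x y) (h2 : G.Adj y z) (h3 : G.Adj z w)
    (hxz : x ≠ z) (hxw : x ≠ w) (hyw : y ≠ w) :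
    (Walk.cons h1 (Walk.cons h2 (Walk.cons h3 Walk.nil))).IsPath := by
  simp [Walk.cons_isPath_iff, Walk.support_cons, h1.ne, h2.ne, h3.ne, hxz, hxw, hyw]

/-- Two distinct neighbors of a vertex in a tree are non-adjacent. -/
lemma nbrs_ne_nonadj (hT : G.IsTree) {x z w : V} (hxz : G.Adj x z) (hxw : G.Adj x w)
    (hzw : z ≠ w) : ¬ G.Adj z w := by
  intro h
  have h1 : (Walk.cons h Walk.nil).IsPath := by simp [Walk.cons_isPath_iff, h.ne]
  have h2 : (Walk.cons hxz.symm (Walk.cons hxw Walk.nil)).IsPath := isPath2 hxz.symm hxw hzw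
  have := congrArg Walk.length (two_paths hT h1 h2)
  simp at this

/-- A pendant vertex `z` attached to the start of a path is non-adjacent to
all later path vertices. -/
lemma pendant_not_adj (hT : G.IsTree) {x y z : V} {W : G.Walk x y} (hW : W.IsPath)
    (hz : z ∉ W.support) (hxz : G.Adj x z) {i : ℕ} (hi1 : 1 ≤ i) (hi : i ≤ W.length)
    (hzi : G.Adj z (W.getVert i)) : False := by
  have hxi : x ≠ W.getVert i := by
    have := path_getVert_ne hT hW (i := 0) (j := i) (by omega) hi
    rwa [Walk.getVert_zero] at this
  have hzi' : z ≠ W.getVert i := fun h => hz (h ▸ Walk.mem_support_iff_exists_getVert.2 ⟨i, rfl, hi⟩)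
  have hQ : (Walk.cons hxz (Walk.cons hzi Walk.nil)).IsPath := isPath2 hxz hzi hxi
  obtain ⟨q, hqlen, hqpath, hqsupp⟩ := subwalk_exists W 0 i (by omega) hi
  have hq' : ((q.copy (Walk.getVert_zero W) rfl)).IsPath := by
    rw [Walk.isPath_copy]; exact hqpath hW
  have heq := two_paths hT hQ hq'
  have hzin : z ∈ (q.copy (Walk.getVert_zero W) rfl).support := by
    rw [← heq]; simp [Walk.support_cons]
  rw [Walk.support_copy] at hzin
  obtain ⟨nn, _, hnn2, hzz⟩ := hqsupp z hzin
  exact hz (hzz ▸ Walk.mem_support_iff_exists_getVert.2 ⟨nn, rfl, hnn2.trans hi⟩)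

/-- Blocks along a path, giving score ≥ number of vertices + 1. -/
lemma blocks_of_path (hT : G.IsTree) :
    ∀ N {x y : V} (W : G.Walk x y), W.length ≤ N → W.IsPath →
    ∃ B, BlocksOn G W.support.toFinset B ∧ W.length + 2 ≤ score B := by
  intro N
  induction N using Nat.strong_induction_on with
  | _ N ih =>
  intro x y W hlen hW
  match W with
  | Walk.nil =>
    refine ⟨{({x} : Finset V)}, ⟨?_, ?_, ?_⟩, ?_⟩
    · intro b hb; rw [Finset.mem_singleton.1 hb]; simp [Walk.support_nil]
    · intro b hb; exact Or.inl ⟨x, Finset.mem_singleton.1 hb⟩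
    · intro b hb b' hb' hne
      rw [Finset.mem_singleton.1 hb, Finset.mem_singleton.1 hb'] at hne
      exact absurd rfl hne
    · simp [score]
  | Walk.cons (v := x1) h Walk.nil =>
    refine ⟨{({x, x1} : Finset V)}, ⟨?_, ?_, ?_⟩, ?_⟩
    · intro b hb; rw [Finset.mem_singleton.1 hb]
      intro z hz
      rcases Finset.mem_insert.1 hz with rfl | hz
      · simp [Walk.support_cons]
      · rw [Finset.mem_singleton.1 hz]; simp [Walk.support_cons]
    · intro b hb; exact Or.inr ⟨x, x1, h.ne, h, Finset.mem_singleton.1 hb⟩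
    · intro b hb b' hb' hne
      rw [Finset.mem_singleton.1 hb, Finset.mem_singleton.1 hb'] at hne
      exact absurd rfl hne
    · have : ({x, x1} : Finset V).card = 2 := by
        rw [Finset.card_insert_of_notMem (fun hh => h.ne (Finset.mem_singleton.1 hh)),
          Finset.card_singleton]
      simp [score, this]
  | Walk.cons (v := x1) h (Walk.cons (v := x2) h2 Walk.nil) =>
    have hne02 : x ≠ x2 := by
      have := path_getVert_ne hT hW (i := 0) (j := 2) (by omega) (by simp)
      simpa using this
    have hnadj02 : ¬ G.Adj x x2 := by
      have := path_getVert_not_adj hT hW (i := 0) (j := 2) (by omega) (by simp)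
      simpa using this
    have hB0 : BlocksOn G (Walk.cons h (Walk.cons h2 Walk.nil) : G.Walk x x2).support.toFinset
        (insert ({x} : Finset V) {({x2} : Finset V)}) := by
      refine blocksOn_insert ?_ ?_ (Or.inl ⟨x, rfl⟩) ?_
      · refine ⟨?_, ?_, ?_⟩
        · intro b hb; rw [Finset.mem_singleton.1 hb]
          simp [Walk.support_cons]
        · intro b hb; exact Or.inl ⟨x2, Finset.mem_singleton.1 hb⟩
        · intro b hb b' hb' hne
          rw [Finset.mem_singleton.1 hb, Finset.mem_singleton.1 hb'] at hne
          exact absurd rfl hne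
      · simp [Walk.support_cons]
      · intro b' hb' z hz y' hy'
        rw [Finset.mem_singleton.1 hb', Finset.mem_singleton] at hy'
        rw [Finset.mem_singleton.1 hz, hy']
        exact ⟨hne02, hnadj02⟩
    refine ⟨_, hB0, ?_⟩
    have hnotmem : ({x} : Finset V) ∉ ({({x2} : Finset V)} : Finset (Finset V)) := by
      intro hmem
      rw [Finset.mem_singleton] at hmem
      exact hne02 (by
        have : x ∈ ({x2} : Finset V) := by rw [← hmem]; simp
        exact Finset.mem_singleton.1 this)
    simp [score, Finset.sum_insert hnotmem]
  | Walk.cons (v := x1) h (Walk.cons (v := x2) h2 (Walk.cons (v := x3) h3 W3)) =>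
    set W' : G.Walk x y := Walk.cons h (Walk.cons h2 (Walk.cons h3 W3)) with hW'
    have hW3path : W3.IsPath := by
      rw [Walk.cons_isPath_iff, Walk.cons_isPath_iff, Walk.cons_isPath_iff] at hW
      exact hW.1.1.1
    have hlen3 : W3.length < N := by
      have : W'.length = W3.length + 3 := by simp [hW']
      omega
    obtain ⟨B3, hB3, hs3⟩ := ih W3.length hlen3 W3 le_rfl hW3path
    -- characterize membership of block elements
    have hmem3 : ∀ b ∈ B3, ∀ z ∈ b, ∃ j, j ≤ W3.length ∧ z = W'.getVert (j + 3) := by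
      intro b hb z hz
      have := hB3.1 b hb hz
      rw [List.mem_toFinset] at this
      obtain ⟨j, hj1, hj2⟩ := Walk.mem_support_iff_exists_getVert.1 this
      exact ⟨j, hj2, by rw [← hj1]; simp [hW', Walk.getVert_cons_succ]⟩
    have hgv : ∀ j, W'.getVert (j + 3) = W3.getVert j := by
      intro j; simp [hW', Walk.getVert_cons_succ]
    have hlenW' : W'.length = W3.length + 3 := by simp [hW']
    have hsub3 : W3.support.toFinset ⊆ W'.support.toFinset := by
      intro z hz
      rw [List.mem_toFinset] at *
      simp [hW', Walk.support_cons]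
      rw [Walk.mem_support_iff_exists_getVert] at hz
      obtain ⟨j, hj1, hj2⟩ := hz
      right; right; right
      exact hj1 ▸ (Walk.mem_support_iff_exists_getVert.2 ⟨j, rfl, hj2⟩)
    have hx1 : W'.getVert 1 = x1 := by simp [hW', Walk.getVert_cons_succ]
    refine ⟨insert ({x, x1} : Finset V) B3, ?_, ?_⟩
    · refine blocksOn_insert (blocksOn_mono hsub3 hB3) ?_
        (Or.inr ⟨x, x1, h.ne, h, rfl⟩) ?_
      · intro z hz
        rw [List.mem_toFinset]
        rcases Finset.mem_insert.1 hz with rfl | hz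
        · exact Walk.start_mem_support _
        · rw [Finset.mem_singleton.1 hz]
          simp [hW', Walk.support_cons]
      · intro b' hb' z hz y' hy'
        obtain ⟨j, hj, hy'eq⟩ := hmem3 b' hb' y' hy'
        have hj3 : j + 3 ≤ W'.length := by omega
        rcases Finset.mem_insert.1 hz with rfl | hz
        · constructor
          · rw [hy'eq]
            have := path_getVert_ne hT hW (i := 0) (j := j + 3) (by omega) hj3
            rwa [Walk.getVert_zero] at this
          · rw [hy'eq]
            have := path_getVert_not_adj hT hW (i := 0) (j := j + 3) (by omega) hj3
            rwa [Walk.getVert_zero] at this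
        · rw [Finset.mem_singleton.1 hz]
          constructor
          · rw [hy'eq, ← hx1]
            exact path_getVert_ne hT hW (i := 1) (j := j + 3) (by omega) hj3
          · rw [hy'eq, ← hx1]
            exact path_getVert_not_adj hT hW (i := 1) (j := j + 3) (by omega) hj3
    · have hnotmem : ({x, x1} : Finset V) ∉ B3 := by
        intro hmem
        obtain ⟨j, hj, hxeq⟩ := hmem3 _ hmem x (by simp)
        have := path_getVert_ne hT hW (i := 0) (j := j + 3) (by omega) (by omega)
        rw [Walk.getVert_zero] at this
        exact this hxeq
      have hc2 : ({x, x1} : Finset V).card = 2 := by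
        rw [Finset.card_insert_of_notMem (fun hh => h.ne (Finset.mem_singleton.1 hh)),
          Finset.card_singleton]
      simp only [score, Finset.sum_insert hnotmem, hc2] at *
      omega

/-- Core construction for a vertex of degree ≥ 4. -/
lemma star_core (hT : G.IsTree) (v : V) (NB : Finset V)
    (hNB : ∀ x, x ∈ NB ↔ G.Adj v x) :
    ∃ B, BlocksOn G (insert v NB) B ∧ score B = 2 * NB.card ∧
      (∀ x ∈ insert v NB, ∃ w : G.Walk v x, ∀ z ∈ w.support, z ∈ insert v NB) := by
  refine ⟨NB.image (fun x => ({x} : Finset V)), ⟨?_, ?_, ?_⟩, ?_, ?_⟩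
  · intro b hb
    obtain ⟨z, hz, rfl⟩ := Finset.mem_image.1 hb
    exact Finset.singleton_subset_iff.2 (Finset.mem_insert_of_mem hz)
  · intro b hb
    obtain ⟨z, hz, rfl⟩ := Finset.mem_image.1 hb
    exact Or.inl ⟨z, rfl⟩
  · intro b hb b' hb' hne
    obtain ⟨z, hz, rfl⟩ := Finset.mem_image.1 hb
    obtain ⟨z', hz', rfl⟩ := Finset.mem_image.1 hb'
    have hzz' : z ≠ z' := fun hh => hne (hh ▸ rfl)
    intro x' hx' y' hy'
    rw [Finset.mem_singleton.1 hx', Finset.mem_singleton.1 hy']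
    exact ⟨hzz', nbrs_ne_nonadj hT ((hNB z).1 hz) ((hNB z').1 hz') hzz'⟩
  · rw [score, Finset.sum_image (fun a _ b _ hab => Finset.singleton_injective hab)]
    simp [Finset.card_singleton, two_mul, Finset.sum_add_distrib]
    ring
  · intro x hx
    rcases Finset.mem_insert.1 hx with rfl | hx
    · exact ⟨Walk.nil, by simp [Walk.support_nil]⟩
    · refine ⟨Walk.cons ((hNB x).1 hx) Walk.nil, ?_⟩
      intro z hz
      simp only [Walk.support_cons, Walk.support_nil, List.mem_cons, List.mem_singleton] at hz
      rcases hz with rfl | hz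
      · exact Finset.mem_insert_self _ _
      · rcases hz with rfl | hz
        · exact Finset.mem_insert_of_mem hx
        · exact absurd hz List.not_mem_nil

/-- Core construction for two non-adjacent vertices of degree 3: the double broom. -/
lemma broom_core (hT : G.IsTree) {v1 v2 : V} (hvne : v1 ≠ v2) (hnadj : ¬ G.Adj v1 v2)
    (NB1 NB2 : Finset V) (h1 : ∀ x, x ∈ NB1 ↔ G.Adj v1 x) (h2 : ∀ x, x ∈ NB2 ↔ G.Adj v2 x)
    (hc1 : NB1.card = 3) (hc2 : NB2.card = 3) :
    ∃ (s' : Finset V) (B : Finset (Finset V)) (r : V), r ∈ s' ∧ BlocksOn G s' B ∧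
      s'.card + 3 ≤ score B ∧
      (∀ x ∈ s', ∃ w : G.Walk r x, ∀ z ∈ w.support, z ∈ s') := by
  classical
  obtain ⟨P, hPpath, -⟩ := hT.existsUnique_path v1 v2
  have hPpath' := hPpath
  set k := P.length with hk
  have hgv0 : P.getVert 0 = v1 := P.getVert_zero
  have hgvk : P.getVert k = v2 := P.getVert_length
  have hk0 : k ≠ 0 := by
    intro h0
    have hh : P.getVert 0 = P.getVert k := by congr 1; omega
    rw [hgv0, hgvk] at hh
    exact hvne hh
  have hk1 : k ≠ 1 := by
    intro h1'
    have := P.adj_getVert_succ (i := 0) (by omega)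
    rw [hgv0] at this
    have h11 : (0 : ℕ) + 1 = k := by omega
    rw [h11, hgvk] at this
    exact hnadj this
  have hk2 : 2 ≤ k := by omega
  set p1 := P.getVert 1 with hp1def
  set q1 := P.getVert (k - 1) with hq1def
  have hadjp1 : G.Adj v1 p1 := by
    have := P.adj_getVert_succ (i := 0) (by omega)
    rwa [hgv0] at this
  have hadjq1 : G.Adj q1 v2 := by
    have := P.adj_getVert_succ (i := k - 1) (by omega)
    have hh : k - 1 + 1 = k := by omega
    rwa [hh, hgvk] at this
  -- neighbors of v1 resp. v2 on the path are p1 resp. q1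
  have hnbr1 : ∀ z, G.Adj v1 z → z ∈ P.support → z = p1 := by
    intro z hz hzs
    exact nbr_on_path hT hPpath hz hzs
  have hnbr2 : ∀ z, G.Adj v2 z → z ∈ P.support → z = q1 := by
    intro z hz hzs
    have hzs' : z ∈ P.reverse.support := by rwa [Walk.support_reverse, List.mem_reverse]
    have := nbr_on_path hT hPpath.reverse hz hzs'
    rwa [Walk.getVert_reverse] at this
  have hp1mem : p1 ∈ NB1 := (h1 p1).2 hadjp1
  have hq1mem : q1 ∈ NB2 := (h2 q1).2 hadjq1.symm
  obtain ⟨a, b, hab, habeq⟩ := Finset.card_eq_two.1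
    (by rw [Finset.card_erase_of_mem hp1mem, hc1] : (NB1.erase p1).card = 2)
  obtain ⟨c, d, hcd, hcdeq⟩ := Finset.card_eq_two.1
    (by rw [Finset.card_erase_of_mem hq1mem, hc2] : (NB2.erase q1).card = 2)
  have hamem : a ∈ NB1.erase p1 := by rw [habeq]; simp
  have hbmem : b ∈ NB1.erase p1 := by rw [habeq]; simp
  have hcmem : c ∈ NB2.erase q1 := by rw [hcdeq]; simp
  have hdmem : d ∈ NB2.erase q1 := by rw [hcdeq]; simp
  have hadja : G.Adj v1 a := (h1 a).1 (Finset.mem_of_mem_erase hamem)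
  have hadjb : G.Adj v1 b := (h1 b).1 (Finset.mem_of_mem_erase hbmem)
  have hadjc : G.Adj v2 c := (h2 c).1 (Finset.mem_of_mem_erase hcmem)
  have hadjd : G.Adj v2 d := (h2 d).1 (Finset.mem_of_mem_erase hdmem)
  have hans : a ∉ P.support := fun hs => (Finset.ne_of_mem_erase hamem) (hnbr1 a hadja hs)
  have hbns : b ∉ P.support := fun hs => (Finset.ne_of_mem_erase hbmem) (hnbr1 b hadjb hs)
  have hcns : c ∉ P.support := fun hs => (Finset.ne_of_mem_erase hcmem) (hnbr2 c hadjc hs)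
  have hdns : d ∉ P.support := fun hs => (Finset.ne_of_mem_erase hdmem) (hnbr2 d hadjd hs)
  -- cross facts between pendant leaves
  have hcross : ∀ z w, G.Adj v1 z → G.Adj v2 w → z ∉ P.support → w ∉ P.support →
      z ≠ w ∧ ¬ G.Adj z w := by
    intro z w hz hw hzs hws
    have hzw : z ≠ w := by
      intro hzw
      subst hzw
      have hQ : (Walk.cons hz (Walk.cons hw.symm Walk.nil)).IsPath :=
        isPath2 hz hw.symm hvne
      have := two_paths hT hQ hPpath
      apply hzs
      rw [← this]
      simp [Walk.support_cons]
    refine ⟨hzw, ?_⟩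
    intro hadjzw
    have hv1w : v1 ≠ w := fun hh => hnadj (hh ▸ hw).symm
    have hzv2 : z ≠ v2 := fun hh => hnadj (hh ▸ hz)
    have hQ : (Walk.cons hz (Walk.cons hadjzw (Walk.cons hw.symm Walk.nil))).IsPath :=
      isPath3 hz hadjzw hw.symm hv1w hvne hzv2
    have := two_paths hT hQ hPpath
    apply hzs
    rw [← this]
    simp [Walk.support_cons]
  have hac := hcross a c hadja hadjc hans hcns
  have had := hcross a d hadja hadjd hans hdns
  have hbc := hcross b c hadjb hadjc hbns hcns
  have hbd := hcross b d hadjb hadjd hbns hdns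
  have hnadjab : ¬ G.Adj a b := nbrs_ne_nonadj hT hadja hadjb hab
  have hnadjcd : ¬ G.Adj c d := nbrs_ne_nonadj hT hadjc hadjd hcd
  -- the internal subpath
  obtain ⟨Wi, hWilen, hWipath', hWisupp⟩ := subwalk_exists P 1 (k - 1) (by omega) (by omega)
  have hWipath : Wi.IsPath := hWipath' hPpath
  have hWilen' : Wi.length = k - 2 := by omega
  obtain ⟨Bi, hBi, hsi⟩ := blocks_of_path hT Wi.length Wi le_rfl hWipath
  -- elements of internal blocks are internal vertices of P
  have hmemi : ∀ bb ∈ Bi, ∀ z ∈ bb, ∃ j, 1 ≤ j ∧ j ≤ k - 1 ∧ z = P.getVert j := by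
    intro bb hbb z hz
    have := hBi.1 bb hbb hz
    rw [List.mem_toFinset] at this
    exact hWisupp z this
  -- the core
  set s' : Finset V := P.support.toFinset ∪ {a, b, c, d} with hs'def
  -- leaf blocks
  have hsep_leaf_path : ∀ (z : V), G.Adj v1 z → z ∉ P.support →
      ∀ bb ∈ Bi, BSep G ({z} : Finset V) bb := by
    intro z hz hzs bb hbb x' hx' y' hy'
    obtain ⟨j, hj1, hj2, hyeq⟩ := hmemi bb hbb y' hy'
    rw [Finset.mem_singleton.1 hx', hyeq]
    constructor
    · intro hh
      exact hzs (hh ▸ Walk.mem_support_iff_exists_getVert.2 ⟨j, rfl, by omega⟩)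
    · intro hadjzj
      exact pendant_not_adj hT hPpath hzs hz hj1 (by omega) hadjzj
  have hsep_leaf_path2 : ∀ (z : V), G.Adj v2 z → z ∉ P.support →
      ∀ bb ∈ Bi, BSep G ({z} : Finset V) bb := by
    intro z hz hzs bb hbb x' hx' y' hy'
    obtain ⟨j, hj1, hj2, hyeq⟩ := hmemi bb hbb y' hy'
    rw [Finset.mem_singleton.1 hx', hyeq]
    have hzs' : z ∉ P.reverse.support := by rwa [Walk.support_reverse, List.mem_reverse]
    constructor
    · intro hh
      exact hzs (hh ▸ Walk.mem_support_iff_exists_getVert.2 ⟨j, rfl, by omega⟩)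
    · intro hadjzj
      have hrev : G.Adj z (P.reverse.getVert (k - j)) := by
        rw [Walk.getVert_reverse]
        have : P.length - (k - j) = j := by omega
        rwa [this]
      exact pendant_not_adj hT hPpath.reverse hzs' hz (by omega)
        (by rw [Walk.length_reverse]; omega) hrev
  -- memberships in the core
  have hPs' : ∀ z ∈ P.support, z ∈ s' := by
    intro z hz
    exact Finset.mem_union_left _ (List.mem_toFinset.2 hz)
  have has' : a ∈ s' := Finset.mem_union_right _ (by simp)
  have hbs' : b ∈ s' := Finset.mem_union_right _ (by simp)
  have hcs' : c ∈ s' := Finset.mem_union_right _ (by simp)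
  have hds' : d ∈ s' := Finset.mem_union_right _ (by simp)
  -- build the leaf blocks
  have singleton_blocks : ∀ z ∈ s', BlocksOn G s' {({z} : Finset V)} := by
    intro z hz
    refine ⟨?_, ?_, ?_⟩
    · intro bb hbb; rw [Finset.mem_singleton.1 hbb]
      exact Finset.singleton_subset_iff.2 hz
    · intro bb hbb; exact Or.inl ⟨z, Finset.mem_singleton.1 hbb⟩
    · intro bb hbb bb' hbb' hne
      rw [Finset.mem_singleton.1 hbb, Finset.mem_singleton.1 hbb'] at hne
      exact absurd rfl hne
  have sep_single : ∀ z w : V, z ≠ w → ¬ G.Adj z w → BSep G ({z} : Finset V) ({w} : Finset V) := by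
    intro z w hzw hnzw x' hx' y' hy'
    rw [Finset.mem_singleton.1 hx', Finset.mem_singleton.1 hy']
    exact ⟨hzw, hnzw⟩
  have hBc : BlocksOn G s' (insert ({c} : Finset V) {({d} : Finset V)}) := by
    refine blocksOn_insert (singleton_blocks d hds') (Finset.singleton_subset_iff.2 hcs')
      (Or.inl ⟨c, rfl⟩) ?_
    intro bb hbb
    rw [Finset.mem_singleton.1 hbb]
    exact sep_single c d hcd hnadjcd
  have hBb : BlocksOn G s' (insert ({b} : Finset V) (insert ({c} : Finset V) {({d} : Finset V)})) := by
    refine blocksOn_insert hBc (Finset.singleton_subset_iff.2 hbs') (Or.inl ⟨b, rfl⟩) ?_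
    intro bb hbb
    rcases Finset.mem_insert.1 hbb with rfl | hbb
    · exact sep_single b c hbc.1 hbc.2
    · rw [Finset.mem_singleton.1 hbb]
      exact sep_single b d hbd.1 hbd.2
  have hBl : BlocksOn G s' (insert ({a} : Finset V)
      (insert ({b} : Finset V) (insert ({c} : Finset V) {({d} : Finset V)}))) := by
    refine blocksOn_insert hBb (Finset.singleton_subset_iff.2 has') (Or.inl ⟨a, rfl⟩) ?_
    intro bb hbb
    rcases Finset.mem_insert.1 hbb with rfl | hbb
    · exact sep_single a b hab hnadjab
    · rcases Finset.mem_insert.1 hbb with rfl | hbb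
      · exact sep_single a c hac.1 hac.2
      · rw [Finset.mem_singleton.1 hbb]
        exact sep_single a d had.1 had.2
  set Bl : Finset (Finset V) := insert ({a} : Finset V)
      (insert ({b} : Finset V) (insert ({c} : Finset V) {({d} : Finset V)})) with hBldef
  -- score of the leaf blocks
  have hsingle_ne : ∀ z w : V, z ≠ w → ({z} : Finset V) ≠ ({w} : Finset V) := by
    intro z w hzw hh
    exact hzw (Finset.mem_singleton.1 (hh ▸ Finset.mem_singleton_self z))
  have hscoreBl : score Bl = 8 := by
    rw [hBldef]
    rw [score]
    rw [Finset.sum_insert (by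
      intro hmem
      rcases Finset.mem_insert.1 hmem with hh | hmem
      · exact hsingle_ne a b hab hh
      · rcases Finset.mem_insert.1 hmem with hh | hmem
        · exact hsingle_ne a c hac.1 hh
        · exact hsingle_ne a d had.1 (Finset.mem_singleton.1 hmem))]
    rw [Finset.sum_insert (by
      intro hmem
      rcases Finset.mem_insert.1 hmem with hh | hmem
      · exact hsingle_ne b c hbc.1 hh
      · exact hsingle_ne b d hbd.1 (Finset.mem_singleton.1 hmem))]
    rw [Finset.sum_insert (by
      intro hmem
      exact hsingle_ne c d hcd (Finset.mem_singleton.1 hmem))]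
    simp
  -- internal blocks live in the core
  have hBi' : BlocksOn G s' Bi := by
    refine blocksOn_mono ?_ hBi
    intro z hz
    rw [List.mem_toFinset] at hz
    obtain ⟨j, hj1, hj2, hzeq⟩ := hWisupp z hz
    exact hPs' _ (hzeq ▸ Walk.mem_support_iff_exists_getVert.2 ⟨j, rfl, by omega⟩)
  -- union
  have hsepBlBi : ∀ bb ∈ Bl, ∀ bb' ∈ Bi, BSep G bb bb' := by
    intro bb hbb bb' hbb'
    rw [hBldef] at hbb
    rcases Finset.mem_insert.1 hbb with rfl | hbb
    · exact hsep_leaf_path a hadja hans bb' hbb'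
    · rcases Finset.mem_insert.1 hbb with rfl | hbb
      · exact hsep_leaf_path b hadjb hbns bb' hbb'
      · rcases Finset.mem_insert.1 hbb with rfl | hbb
        · exact hsep_leaf_path2 c hadjc hcns bb' hbb'
        · rw [Finset.mem_singleton.1 hbb]
          exact hsep_leaf_path2 d hadjd hdns bb' hbb'
  obtain ⟨hBU, hscoreU⟩ := blocksOn_union hBl hBi' hsepBlBi
  -- cardinality of the core
  have hsupcard : P.support.toFinset.card = k + 1 := by
    rw [List.toFinset_card_of_nodup hPpath.support_nodup, Walk.length_support]
  have habcd_card : ({a, b, c, d} : Finset V).card = 4 := by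
    rw [Finset.card_insert_of_notMem (by
      intro hmem
      rcases Finset.mem_insert.1 hmem with hh | hmem
      · exact hab hh
      · rcases Finset.mem_insert.1 hmem with hh | hmem
        · exact hac.1 hh
        · exact had.1 (Finset.mem_singleton.1 hmem))]
    rw [Finset.card_insert_of_notMem (by
      intro hmem
      rcases Finset.mem_insert.1 hmem with hh | hmem
      · exact hbc.1 hh
      · exact hbd.1 (Finset.mem_singleton.1 hmem))]
    rw [Finset.card_insert_of_notMem (by
      intro hmem
      exact hcd (Finset.mem_singleton.1 hmem))]
    simp
  have hdisj : Disjoint P.support.toFinset ({a, b, c, d} : Finset V) := by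
    rw [Finset.disjoint_right]
    intro z hz hzs
    rw [List.mem_toFinset] at hzs
    rcases Finset.mem_insert.1 hz with rfl | hz
    · exact hans hzs
    · rcases Finset.mem_insert.1 hz with rfl | hz
      · exact hbns hzs
      · rcases Finset.mem_insert.1 hz with rfl | hz
        · exact hcns hzs
        · rw [Finset.mem_singleton.1 hz] at hzs
          exact hdns hzs
  have hs'card : s'.card = k + 5 := by
    rw [hs'def, Finset.card_union_of_disjoint hdisj, hsupcard, habcd_card]
  -- conclusion
  refine ⟨s', Bl ∪ Bi, v1, hPs' v1 (Walk.start_mem_support P), hBU, ?_, ?_⟩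
  · rw [hscoreU, hscoreBl, hs'card]
    omega
  · intro x hx
    rcases Finset.mem_union.1 hx with hx | hx
    · rw [List.mem_toFinset] at hx
      refine ⟨P.takeUntil x hx, ?_⟩
      intro z hz
      exact hPs' z (Walk.support_takeUntil_subset P hx hz)
    · have hleafwalk : ∀ w : V, G.Adj v1 w → w ∈ s' → ∃ ww : G.Walk v1 w, ∀ z ∈ ww.support, z ∈ s' := by
        intro w hw hws
        refine ⟨Walk.cons hw Walk.nil, ?_⟩
        intro z hz
        simp only [Walk.support_cons, Walk.support_nil, List.mem_cons, List.mem_singleton] at hz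
        rcases hz with rfl | hz
        · exact hPs' z (Walk.start_mem_support P)
        · rcases hz with rfl | hz
          · exact hws
          · exact absurd hz List.not_mem_nil
      have hleafwalk2 : ∀ w : V, G.Adj v2 w → w ∈ s' → ∃ ww : G.Walk v1 w, ∀ z ∈ ww.support, z ∈ s' := by
        intro w hw hws
        refine ⟨P.concat hw, ?_⟩
        intro z hz
        rw [Walk.support_concat, List.mem_append] at hz
        rcases hz with hz | hz
        · exact hPs' z hz
        · rw [List.mem_singleton.1 hz]
          exact hws
      rcases Finset.mem_insert.1 hx with rfl | hx
      · exact hleafwalk x hadja has'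
      · rcases Finset.mem_insert.1 hx with rfl | hx
        · exact hleafwalk x hadjb hbs'
        · rcases Finset.mem_insert.1 hx with rfl | hx
          · exact hleafwalk2 x hadjc hcs'
          · rw [Finset.mem_singleton.1 hx]
            exact hleafwalk2 d hadjd hds'

lemma deg_eq_card [Fintype V] [DecidableRel G.Adj] (v : V) :
    Nat.card (G.neighborSet v) = (G.neighborFinset v).card := by
  rw [Nat.card_eq_fintype_card, ← Set.toFinset_card]
  rfl

lemma main_blocks [Fintype V] (hT : G.IsTree)
    (h : (∃ v, 4 ≤ Nat.card (G.neighborSet v)) ∨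
      (∃ u v, u ≠ v ∧ ¬ G.Adj u v ∧ Nat.card (G.neighborSet u) = 3 ∧
        Nat.card (G.neighborSet v) = 3)) :
    ∃ B, BlocksOn G Finset.univ B ∧ Fintype.card V + 3 ≤ score B := by
  classical
  rcases h with ⟨v, hv⟩ | ⟨v1, v2, hvne, hnadj, hd1, hd2⟩
  · -- star case
    rw [deg_eq_card] at hv
    obtain ⟨B0, hB0, hscore0, hpc⟩ := star_core hT v (G.neighborFinset v)
      (fun x => G.mem_neighborFinset v x)
    have hvnb : v ∉ G.neighborFinset v := by
      rw [SimpleGraph.mem_neighborFinset]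
      exact G.irrefl
    have hscard : (insert v (G.neighborFinset v)).card = (G.neighborFinset v).card + 1 :=
      Finset.card_insert_of_notMem hvnb
    obtain ⟨B, hB, hscore⟩ := shell_lemma hT v _ hpc hB0 (Fintype.card V) Finset.univ
      (by rw [Finset.card_univ]) (Finset.subset_univ _)
    refine ⟨B, hB, ?_⟩
    have hle : (insert v (G.neighborFinset v)).card ≤ Finset.univ.card :=
      Finset.card_le_card (Finset.subset_univ _)
    rw [Finset.card_univ] at hle hscore
    rw [hscard] at hle hscore
    omega
  · -- broom case
    rw [deg_eq_card] at hd1 hd2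
    obtain ⟨s', B0, r, hr, hB0, hscore0, hpc⟩ := broom_core hT hvne hnadj
      (G.neighborFinset v1) (G.neighborFinset v2)
      (fun x => G.mem_neighborFinset v1 x) (fun x => G.mem_neighborFinset v2 x) hd1 hd2
    obtain ⟨B, hB, hscore⟩ := shell_lemma hT r s' hpc hB0 (Fintype.card V) Finset.univ
      (by rw [Finset.card_univ]) (Finset.subset_univ _)
    refine ⟨B, hB, ?_⟩
    have hle : s'.card ≤ Finset.univ.card := Finset.card_le_card (Finset.subset_univ _)
    rw [Finset.card_univ] at hle hscore
    omega

lemma tenacity_lt_one_of_blocks [Fintype V] (hT : G.IsTree) {B : Finset (Finset V)}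
    (hB : BlocksOn G Finset.univ B) (hscore : Fintype.card V + 3 ≤ score B) :
    G.tenacity < 1 := by
  classical
  set D : Finset V := B.biUnion id with hDdef
  have block_unique : ∀ b ∈ B, ∀ b' ∈ B, ∀ z : V, z ∈ b → z ∈ b' → b = b' := by
    intro b hb b' hb' z hz hz'
    by_contra hne
    exact (hB.2.2 b hb b' hb' hne z hz z hz').1 rfl
  have hDcard : D.card = ∑ b ∈ B, b.card := by
    rw [hDdef]
    refine Finset.card_biUnion ?_
    intro b hb b' hb' hne
    show Disjoint b b'
    rw [Finset.disjoint_left]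
    intro z hz hz'
    exact hne (block_unique b hb b' hb' z hz hz')
  have hscore_sum : score B = D.card + B.card := by
    rw [score, hDcard, Finset.sum_add_distrib]
    simp
  have hDle : D.card ≤ Fintype.card V := by
    rw [← Finset.card_univ]
    exact Finset.card_le_card (Finset.subset_univ _)
  have hBcard3 : 3 ≤ B.card := by omega
  set X : Finset V := Dᶜ with hXdef
  have hmemD : ∀ v : V, v ∉ X ↔ v ∈ D := by
    intro v
    rw [hXdef, Finset.mem_compl, not_not]
  have hXcard : X.card = Fintype.card V - D.card := by
    rw [hXdef, Finset.card_compl]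
  -- the function assigning to each vertex of the complement its block
  have hex : ∀ v : {v : V // v ∉ X}, ∃ b, b ∈ B ∧ (v : V) ∈ b := by
    intro v
    have := (hmemD v).1 v.2
    rw [hDdef, Finset.mem_biUnion] at this
    obtain ⟨b, hb, hvb⟩ := this
    exact ⟨b, hb, hvb⟩
  choose f hf1 hf2 using hex
  have hAdjSame : ∀ v w : {v : V // v ∉ X}, (G.delVerts X).Adj v w → f v = f w := by
    intro v w hadj
    by_contra hne
    exact (hB.2.2 _ (hf1 v) _ (hf1 w) hne _ (hf2 v) _ (hf2 w)).2 hadj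
  have hWalkSame : ∀ (v w : {v : V // v ∉ X}) (p : (G.delVerts X).Walk v w), f v = f w := by
    intro v w p
    induction p with
    | nil => rfl
    | cons h p ih => exact (hAdjSame _ _ h).trans ih
  set F : (G.delVerts X).ConnectedComponent → Finset V :=
    ConnectedComponent.lift f (fun v w p _ => hWalkSame v w p) with hFdef
  have hFmk : ∀ v, F ((G.delVerts X).connectedComponentMk v) = f v := fun v => rfl
  have hFmem : ∀ c, F c ∈ B := by
    refine ConnectedComponent.ind ?_
    intro v
    rw [hFmk]
    exact hf1 v
  set F' : (G.delVerts X).ConnectedComponent → {b : Finset V // b ∈ B} :=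
    fun c => ⟨F c, hFmem c⟩ with hF'def
  have hinj : Function.Injective F' := by
    refine ConnectedComponent.ind₂ ?_
    intro v w hvw
    have hfvw : f v = f w := congrArg Subtype.val hvw
    have hvmem : (v : V) ∈ f w := hfvw ▸ hf2 v
    rcases hB.2.1 _ (hf1 w) with ⟨x, hx⟩ | ⟨x, y, hxy, hadjxy, hxyeq⟩
    · rw [hx] at hvmem
      have hw : (w : V) ∈ f w := hf2 w
      rw [hx] at hw
      have : (v : V) = (w : V) := by
        rw [Finset.mem_singleton.1 hvmem, Finset.mem_singleton.1 hw]
      have : v = w := Subtype.ext this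
      rw [this]
    · rw [hxyeq] at hvmem
      have hw : (w : V) ∈ f w := hf2 w
      rw [hxyeq] at hw
      by_cases heq : (v : V) = (w : V)
      · rw [Subtype.ext heq]
      · have hadj : G.Adj (v : V) (w : V) := by
          rcases Finset.mem_insert.1 hvmem with hv1 | hv1 <;>
            rcases Finset.mem_insert.1 hw with hw1 | hw1
          · exact absurd (hv1.trans hw1.symm) heq
          · rw [hv1, Finset.mem_singleton.1 hw1]; exact hadjxy
          · rw [Finset.mem_singleton.1 hv1, hw1]; exact hadjxy.symm
          · exact absurd ((Finset.mem_singleton.1 hv1).trans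
              (Finset.mem_singleton.1 hw1).symm) heq
        exact ConnectedComponent.eq.2 (Adj.reachable (by exact hadj))
  have hsurj : Function.Surjective F' := by
    intro ⟨b, hb⟩
    obtain ⟨x, hx⟩ := block_nonempty hB hb
    have hxD : x ∈ D := by
      rw [hDdef, Finset.mem_biUnion]
      exact ⟨b, hb, hx⟩
    have hxX : x ∉ X := (hmemD x).2 hxD
    refine ⟨(G.delVerts X).connectedComponentMk ⟨x, hxX⟩, ?_⟩
    rw [hF'def]
    refine Subtype.ext ?_
    simp only [hFmk]
    exact block_unique _ (hf1 ⟨x, hxX⟩) b hb x (hf2 ⟨x, hxX⟩) hx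
  have homega : (G.delVerts X).omegaComp = B.card := by
    rw [SimpleGraph.omegaComp, Nat.card_eq_of_bijective F' ⟨hinj, hsurj⟩,
      Nat.card_eq_fintype_card, Fintype.card_coe]
  -- tau bound
  have htau : (G.delVerts X).tauMax ≤ 2 := by
    rw [SimpleGraph.tauMax]
    have hne : Nonempty ((G.delVerts X).ConnectedComponent) := by
      obtain ⟨b, hb⟩ : B.Nonempty := Finset.card_pos.1 (by omega)
      obtain ⟨x, hx⟩ := block_nonempty hB hb
      have hxX : x ∉ X := (hmemD x).2 (by rw [hDdef, Finset.mem_biUnion]; exact ⟨b, hb, hx⟩)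
      exact ⟨(G.delVerts X).connectedComponentMk ⟨x, hxX⟩⟩
    refine csSup_le (Set.range_nonempty _) ?_
    rintro m ⟨c, rfl⟩
    show Nat.card {v : {v : V // v ∉ X} // (G.delVerts X).connectedComponentMk v = c} ≤ 2
    have hinj2 : Function.Injective
        (fun v : {v : {v : V // v ∉ X} // (G.delVerts X).connectedComponentMk v = c} =>
          (⟨(v : {v : V // v ∉ X}).1, by
            have hc : F c = f v.1 := (congrArg F v.2).symm.trans (hFmk v.1)
            rw [hc]
            exact hf2 v.1⟩ : {z : V // z ∈ F c})) := by
      intro u w huw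
      simp only [Subtype.mk.injEq] at huw
      exact Subtype.ext (Subtype.ext huw)
    have := Nat.card_le_card_of_injective _ hinj2
    have hcard2 : Nat.card {z : V // z ∈ F c} ≤ 2 := by
      rw [Nat.card_eq_fintype_card, Fintype.card_coe]
      exact block_card_le hB (hFmem c)
    omega
  -- the cut and the final bound
  have hXtau : X.card + (G.delVerts X).tauMax + 1 ≤ (G.delVerts X).omegaComp := by
    rw [homega, hXcard]
    omega
  have hcut : G.IsVertexCut X := by
    rw [SimpleGraph.IsVertexCut, homega]
    omega
  have homegapos : (0 : ℝ) < ((G.delVerts X).omegaComp : ℝ) := by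
    rw [homega]
    exact_mod_cast Nat.lt_of_lt_of_le (by norm_num) hBcard3
  have ht0 : ((X.card : ℝ) + (G.delVerts X).tauMax) / (G.delVerts X).omegaComp < 1 := by
    rw [div_lt_one homegapos]
    have : (X.card : ℝ) + (G.delVerts X).tauMax + 1 ≤ (G.delVerts X).omegaComp := by
      exact_mod_cast hXtau
    linarith
  have hmem : ((X.card : ℝ) + (G.delVerts X).tauMax) / (G.delVerts X).omegaComp ∈
      { t : ℝ | ∃ X : Finset V, G.IsVertexCut X ∧
        t = ((X.card : ℝ) + (G.delVerts X).tauMax) / (G.delVerts X).omegaComp } :=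
    ⟨X, hcut, rfl⟩
  have hbdd : BddBelow { t : ℝ | ∃ X : Finset V, G.IsVertexCut X ∧
      t = ((X.card : ℝ) + (G.delVerts X).tauMax) / (G.delVerts X).omegaComp } := by
    refine ⟨0, ?_⟩
    rintro t ⟨Y, _, rfl⟩
    positivity
  calc G.tenacity ≤ _ := csInf_le hbdd hmem
  _ < 1 := ht0

end AuxTenacity

theorem tree_odd_bad_degrees (n : ℕ) (hodd : Odd n) (hn : 3 ≤ n)
    (G : SimpleGraph (Fin n)) (hT : G.IsTree)
    (h : (∃ v, 4 ≤ G.deg v) ∨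
      (∃ u v, u ≠ v ∧ ¬ G.Adj u v ∧ G.deg u = 3 ∧ G.deg v = 3)) :
    G.tenacity < 1 := by 
  classical
  have h' : (∃ v, 4 ≤ Nat.card (G.neighborSet v)) ∨
      (∃ u v, u ≠ v ∧ ¬ G.Adj u v ∧ Nat.card (G.neighborSet u) = 3 ∧
        Nat.card (G.neighborSet v) = 3) := h
  obtain ⟨B, hB, hscore⟩ := main_blocks hT h'
  have hscore' : Fintype.card (Fin n) + 3 ≤ score B := hscore
  exact tenacity_lt_one_of_blocks hT hB hscore'
end

section
/- If G is a tree on an odd number n ≥ 3 of vertices with maximum degree at most 3 such that any two vertices of degree 3 in G are adjacent, then T(G) = 1. -/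
open SimpleGraph

namespace SimpleGraph

variable {V : Type*}

/-- Delete all edges at `a`, keeping the vertex. -/
def isolate (G : SimpleGraph V) (a : V) : SimpleGraph V where
  Adj u v := G.Adj u v ∧ u ≠ a ∧ v ≠ a
  symm := ⟨fun u v ⟨h, h1, h2⟩ => ⟨h.symm, h2, h1⟩⟩
  loopless := ⟨fun v ⟨h, _, _⟩ => G.loopless.irrefl v h⟩

lemma isolate_le (G : SimpleGraph V) (a : V) : G.isolate a ≤ G := fun _ _ h => h.1

lemma reach_isolate_of_avoid {G : SimpleGraph V} {a u v : V} (w : G.Walk u v)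
    (hav : a ∉ w.support) : (G.isolate a).Reachable u v := by
  induction w with
  | nil => exact Reachable.refl _
  | cons h q ih =>
      rw [SimpleGraph.Walk.support_cons] at hav
      simp only [List.mem_cons] at hav
      push_neg at hav
      exact (Adj.reachable (show (G.isolate a).Adj _ _ from ⟨h, Ne.symm hav.1, fun hh => hav.2 (hh ▸ q.start_mem_support)⟩)).trans (ih hav.2)

lemma exists_neighbor_reach {G : SimpleGraph V} {a u : V} (w : G.Walk u a) (hu : u ≠ a) :
    ∃ n, G.Adj a n ∧ (G.isolate a).Reachable u n := by
  induction w with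
  | nil => exact absurd rfl hu
  | @cons u w' a h q ih =>
      by_cases hw : w' = a
      · subst hw
        exact ⟨u, h.symm, Reachable.refl _⟩
      · obtain ⟨n, hn, hr⟩ := ih hw
        exact ⟨n, hn, (Adj.reachable (show (G.isolate a).Adj _ _ from ⟨h, hu, hw⟩)).trans hr⟩

lemma card_comp_isolate [Fintype V] (G : SimpleGraph V) (a : V) :
    Nat.card (G.isolate a).ConnectedComponent ≤ Nat.card G.ConnectedComponent + G.deg a := by
  classical
  set K := G.isolate a with hK
  let m : K.ConnectedComponent → G.ConnectedComponent :=
    ConnectedComponent.map (Hom.ofLE (G.isolate_le a))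
  have hm : ∀ v : V, m (K.connectedComponentMk v) = G.connectedComponentMk v := fun v => rfl
  have hex : ∀ c : K.ConnectedComponent,
      m c = G.connectedComponentMk a → c ≠ K.connectedComponentMk a →
      ∃ n : G.neighborSet a, K.connectedComponentMk (n : V) = c := by
    intro c hc hca
    obtain ⟨v, hv⟩ := c.exists_rep
    have hv' : K.connectedComponentMk v = c := hv
    have hva : v ≠ a := fun h => hca (by rw [← hv', h])
    rw [← hv', hm] at hc
    obtain ⟨w⟩ := (ConnectedComponent.exact hc : G.Reachable v a)
    obtain ⟨n, hn, hr⟩ := exists_neighbor_reach w hva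
    exact ⟨⟨n, hn⟩, (ConnectedComponent.sound hr).symm.trans hv'⟩
  let f : K.ConnectedComponent → G.ConnectedComponent ⊕ G.neighborSet a := fun c =>
    if h : m c = G.connectedComponentMk a ∧ c ≠ K.connectedComponentMk a then
      Sum.inr (hex c h.1 h.2).choose
    else Sum.inl (m c)
  have hfinj : Function.Injective f := by
    intro c c' hcc
    by_cases h : m c = G.connectedComponentMk a ∧ c ≠ K.connectedComponentMk a <;>
      by_cases h' : m c' = G.connectedComponentMk a ∧ c' ≠ K.connectedComponentMk a
    · rw [show f c = Sum.inr (hex c h.1 h.2).choose from dif_pos h,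
        show f c' = Sum.inr (hex c' h'.1 h'.2).choose from dif_pos h'] at hcc
      have := Sum.inr.inj hcc
      rw [← (hex c h.1 h.2).choose_spec, ← (hex c' h'.1 h'.2).choose_spec, this]
    · rw [show f c = Sum.inr (hex c h.1 h.2).choose from dif_pos h,
        show f c' = Sum.inl (m c') from dif_neg h'] at hcc
      exact absurd hcc (by simp)
    · rw [show f c = Sum.inl (m c) from dif_neg h,
        show f c' = Sum.inr (hex c' h'.1 h'.2).choose from dif_pos h'] at hcc
      exact absurd hcc (by simp)
    · rw [show f c = Sum.inl (m c) from dif_neg h,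
        show f c' = Sum.inl (m c') from dif_neg h'] at hcc
      have hmm : m c = m c' := Sum.inl.inj hcc
      rw [not_and_or, not_not] at h h'
      rcases h with h | h
      · rcases h' with h' | h'
        · obtain ⟨v, hv⟩ := c.exists_rep
          have hv' : K.connectedComponentMk v = c := hv
          obtain ⟨v', hw⟩ := c'.exists_rep
          have hw' : K.connectedComponentMk v' = c' := hw
          rw [← hv', ← hw', hm, hm] at hmm
          rw [← hv', hm] at h
          obtain ⟨w⟩ := (ConnectedComponent.exact hmm : G.Reachable v v')
          have hav : a ∉ w.support := fun hmem =>
            h (ConnectedComponent.sound ⟨w.takeUntil a hmem⟩)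
          rw [← hv', ← hw']
          exact ConnectedComponent.sound (reach_isolate_of_avoid w hav)
        · rw [h', hm] at hmm
          exact absurd hmm h
      · rcases h' with h' | h'
        · rw [h, hm] at hmm
          exact absurd hmm.symm h'
        · rw [h, h']
  calc Nat.card K.ConnectedComponent
      ≤ Nat.card (G.ConnectedComponent ⊕ G.neighborSet a) :=
        Nat.card_le_card_of_injective f hfinj
    _ = _ := Nat.card_sum

/-- Delete all edges touching `X`, keeping vertices. -/
def isolateSet (G : SimpleGraph V) (X : Finset V) : SimpleGraph V where
  Adj u v := G.Adj u v ∧ u ∉ X ∧ v ∉ X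
  symm := ⟨fun u v ⟨h, h1, h2⟩ => ⟨h.symm, h2, h1⟩⟩
  loopless := ⟨fun v ⟨h, _, _⟩ => G.loopless.irrefl v h⟩

lemma isolateSet_empty (G : SimpleGraph V) : G.isolateSet ∅ = G := by
  ext u v
  simp [isolateSet]

lemma isolateSet_insert [DecidableEq V] (G : SimpleGraph V) (a : V) (X : Finset V) :
    G.isolateSet (insert a X) = (G.isolateSet X).isolate a := by
  ext u v
  simp only [isolateSet, isolate, Finset.mem_insert]
  constructor
  · rintro ⟨h, h1, h2⟩
    push_neg at h1 h2
    exact ⟨⟨h, h1.2, h2.2⟩, h1.1, h2.1⟩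
  · rintro ⟨⟨h, h1, h2⟩, h3, h4⟩
    push_neg
    exact ⟨h, ⟨h3, h1⟩, ⟨h4, h2⟩⟩

lemma deg_isolateSet_le [Fintype V] (G : SimpleGraph V) (X : Finset V) (v : V) :
    (G.isolateSet X).deg v ≤ G.deg v := by
  rw [deg, deg, Nat.card_coe_set_eq, Nat.card_coe_set_eq]
  exact Set.ncard_le_ncard (fun w hw => hw.1) (Set.toFinite _)

lemma card_comp_isolateSet [Fintype V] (G : SimpleGraph V) (X : Finset V) :
    Nat.card (G.isolateSet X).ConnectedComponent
      ≤ Nat.card G.ConnectedComponent + ∑ v ∈ X, G.deg v := by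
  classical
  induction X using Finset.induction_on with
  | empty => rw [isolateSet_empty]; simp
  | @insert a X ha ih =>
      rw [isolateSet_insert, Finset.sum_insert ha]
      calc Nat.card ((G.isolateSet X).isolate a).ConnectedComponent
          ≤ Nat.card (G.isolateSet X).ConnectedComponent + (G.isolateSet X).deg a :=
            card_comp_isolate ..
        _ ≤ Nat.card G.ConnectedComponent + ∑ v ∈ X, G.deg v + G.deg a :=
            Nat.add_le_add ih (deg_isolateSet_le ..)
        _ = Nat.card G.ConnectedComponent + (G.deg a + ∑ v ∈ X, G.deg v) := by ring

lemma isolateSet_eq_of_mem {G : SimpleGraph V} {X : Finset V} {u v : V} (hu : u ∈ X)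
    (w : (G.isolateSet X).Walk u v) : u = v := by
  cases w with
  | nil => rfl
  | cons h q => exact absurd hu h.2.1

lemma reach_delVerts_of_walk {G : SimpleGraph V} {X : Finset V} {u v : V}
    (w : (G.isolateSet X).Walk u v) (hu : u ∉ X) (hv : v ∉ X) :
    (G.delVerts X).Reachable ⟨u, hu⟩ ⟨v, hv⟩ := by
  induction w with
  | nil => exact Reachable.refl _
  | @cons u b v h q ih =>
      exact (Adj.reachable (show (G.delVerts X).Adj ⟨u, hu⟩ ⟨b, h.2.2⟩ from h.1)).trans
        (ih h.2.2 hv)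

lemma card_comp_delVerts_add [Fintype V] (G : SimpleGraph V) (X : Finset V) :
    Nat.card (G.delVerts X).ConnectedComponent + X.card
      ≤ Nat.card (G.isolateSet X).ConnectedComponent := by
  classical
  let hom : G.delVerts X →g G.isolateSet X :=
    ⟨fun v => (v : V), fun {u v} h => ⟨h, u.2, v.2⟩⟩
  let f : (G.delVerts X).ConnectedComponent ⊕ {x // x ∈ X} →
      (G.isolateSet X).ConnectedComponent := fun c =>
    match c with
    | Sum.inl c => c.map hom
    | Sum.inr x => (G.isolateSet X).connectedComponentMk (x : V)
  have hfinj : Function.Injective f := by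
    rintro (c | x) (c' | x') hcc
    · obtain ⟨v, hv⟩ := c.exists_rep
      have hv' : (G.delVerts X).connectedComponentMk v = c := hv
      obtain ⟨v', hw⟩ := c'.exists_rep
      have hw' : (G.delVerts X).connectedComponentMk v' = c' := hw
      rw [← hv', ← hw'] at hcc ⊢
      have : (G.isolateSet X).connectedComponentMk (v : V)
          = (G.isolateSet X).connectedComponentMk (v' : V) := hcc
      obtain ⟨w⟩ := (ConnectedComponent.exact this :
        (G.isolateSet X).Reachable (v : V) (v' : V))
      have := reach_delVerts_of_walk w v.2 v'.2
      exact congrArg Sum.inl (ConnectedComponent.sound this)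
    · exfalso
      obtain ⟨v, hv⟩ := c.exists_rep
      have hv' : (G.delVerts X).connectedComponentMk v = c := hv
      rw [← hv'] at hcc
      have : (G.isolateSet X).connectedComponentMk (x' : V)
          = (G.isolateSet X).connectedComponentMk (v : V) := hcc.symm
      obtain ⟨w⟩ := (ConnectedComponent.exact this :
        (G.isolateSet X).Reachable (x' : V) (v : V))
      exact v.2 ((isolateSet_eq_of_mem x'.2 w) ▸ x'.2)
    · exfalso
      obtain ⟨v, hv⟩ := c'.exists_rep
      have hv' : (G.delVerts X).connectedComponentMk v = c' := hv
      rw [← hv'] at hcc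
      have : (G.isolateSet X).connectedComponentMk (x : V)
          = (G.isolateSet X).connectedComponentMk (v : V) := hcc
      obtain ⟨w⟩ := (ConnectedComponent.exact this :
        (G.isolateSet X).Reachable (x : V) (v : V))
      exact v.2 ((isolateSet_eq_of_mem x.2 w) ▸ x.2)
    · have : (G.isolateSet X).connectedComponentMk (x : V)
          = (G.isolateSet X).connectedComponentMk (x' : V) := hcc
      obtain ⟨w⟩ := (ConnectedComponent.exact this :
        (G.isolateSet X).Reachable (x : V) (x' : V))
      have := isolateSet_eq_of_mem x.2 w
      exact congrArg Sum.inr (Subtype.ext this)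
  calc Nat.card (G.delVerts X).ConnectedComponent + X.card
      = Nat.card ((G.delVerts X).ConnectedComponent ⊕ {x // x ∈ X}) := by
        rw [Nat.card_sum, Nat.card_eq_finsetCard]
    _ ≤ Nat.card (G.isolateSet X).ConnectedComponent :=
        Nat.card_le_card_of_injective f hfinj

lemma card_comp_eq_one {G : SimpleGraph V} (h : G.Connected) :
    Nat.card G.ConnectedComponent = 1 := by
  haveI : Nonempty V := h.nonempty
  haveI := h.preconnected.subsingleton_connectedComponent
  haveI : Nonempty G.ConnectedComponent := ⟨G.connectedComponentMk (Classical.arbitrary V)⟩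
  rw [Nat.card_eq_one_iff_unique]
  exact ⟨inferInstance, inferInstance⟩

lemma not_triangle {G : SimpleGraph V} (hG : G.IsAcyclic) {u v w : V}
    (huv : G.Adj u v) (hvw : G.Adj v w) (huw : G.Adj u w) : False := by
  have hp2 : (Walk.cons huv (Walk.cons hvw Walk.nil) : G.Walk u w).IsPath := by
    simp [Walk.isPath_def, huv.ne, hvw.ne, huw.ne]
  have := hG.path_unique ⟨_, hp2⟩ (Path.singleton huw)
  have hlen := congrArg (fun p : G.Path u w => (p : G.Walk u w).length) this
  simp [Path.singleton] at hlen

lemma deg_isolate_le_of_adj [Fintype V] {G : SimpleGraph V} {u v : V} (hA : G.Adj u v)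
    (hd : G.deg v = 3) : (G.isolate u).deg v ≤ 2 := by
  have hsub : (G.isolate u).neighborSet v ⊆ G.neighborSet v \ {u} := by
    rintro x ⟨hx, _, hxu⟩
    exact ⟨hx, hxu⟩
  have h1 : (G.isolate u).deg v ≤ (G.neighborSet v \ {u}).ncard := by
    rw [deg, Nat.card_coe_set_eq]
    exact Set.ncard_le_ncard hsub (Set.toFinite _)
  have h2 : (G.neighborSet v \ {u}).ncard = (G.neighborSet v).ncard - 1 :=
    Set.ncard_diff_singleton_of_mem (by exact hA.symm)
  have h3 : (G.neighborSet v).ncard = 3 := by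
    rw [← Nat.card_coe_set_eq]; exact hd
  omega

lemma omega_del_le [Fintype V] {G : SimpleGraph V} (hT : G.IsTree)
    (hdeg : ∀ v, G.deg v ≤ 3)
    (hadj : ∀ u v, G.deg u = 3 → G.deg v = 3 → u ≠ v → G.Adj u v)
    (X : Finset V) :
    Nat.card (G.delVerts X).ConnectedComponent + X.card ≤ 2 * X.card + 2 := by
  classical
  have hco := card_comp_delVerts_add G X
  have hG1 : Nat.card G.ConnectedComponent = 1 := card_comp_eq_one hT.isConnected
  by_cases h2 : ∃ u ∈ X, ∃ v ∈ X, u ≠ v ∧ G.deg u = 3 ∧ G.deg v = 3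
  · obtain ⟨u, hu, v, hv, huv, hdu, hdv⟩ := h2
    have hA : G.Adj u v := hadj u v hdu hdv huv
    have hEq : G.isolateSet X = (G.isolate u).isolateSet (X.erase u) := by
      ext a b
      simp only [isolateSet, isolate, Finset.mem_erase]
      constructor
      · rintro ⟨h, ha, hb⟩
        exact ⟨⟨h, fun hh => ha (hh ▸ hu), fun hh => hb (hh ▸ hu)⟩,
          fun hh => ha hh.2, fun hh => hb hh.2⟩
      · rintro ⟨⟨h, ha, hb⟩, h3, h4⟩
        exact ⟨h, fun hh => h3 ⟨ha, hh⟩, fun hh => h4 ⟨hb, hh⟩⟩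
    have h1 := card_comp_isolateSet (G.isolate u) (X.erase u)
    have hiso : Nat.card (G.isolate u).ConnectedComponent ≤ 4 := by
      have := card_comp_isolate G u
      rw [hG1, hdu] at this
      exact this
    have h3 : ∀ w ∈ X.erase u, (G.isolate u).deg w ≤ 2 := by
      intro w hw
      obtain ⟨hwu, hwX⟩ := Finset.mem_erase.mp hw
      by_cases hwv : w = v
      · subst hwv
        exact deg_isolate_le_of_adj hA hdv
      · have hle : (G.isolate u).deg w ≤ G.deg w := by
          rw [deg, deg, Nat.card_coe_set_eq, Nat.card_coe_set_eq]
          exact Set.ncard_le_ncard (fun x hx => hx.1) (Set.toFinite _)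
        have : G.deg w ≠ 3 := by
          intro hd3
          exact not_triangle hT.IsAcyclic hA ((hadj w v hd3 hdv hwv).symm)
            (hadj w u hd3 hdu hwu).symm
        have := hdeg w
        omega
    have hsum : ∑ w ∈ X.erase u, (G.isolate u).deg w ≤ (X.erase u).card * 2 := by
      have := Finset.sum_le_card_nsmul (X.erase u) (fun w => (G.isolate u).deg w) 2 h3
      rwa [smul_eq_mul] at this
    have hcard : (X.erase u).card = X.card - 1 := Finset.card_erase_of_mem hu
    have hx1 : 1 ≤ X.card := Finset.card_pos.mpr ⟨u, hu⟩
    rw [hEq] at hco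
    omega
  · push_neg at h2
    have h1 := card_comp_isolateSet G X
    have hsum : ∑ v ∈ X, G.deg v ≤ 2 * X.card + 1 := by
      by_cases h3 : ∃ u ∈ X, G.deg u = 3
      · obtain ⟨u, hu, hdu⟩ := h3
        have h4 : ∀ w ∈ X.erase u, G.deg w ≤ 2 := by
          intro w hw
          obtain ⟨hwu, hwX⟩ := Finset.mem_erase.mp hw
          have := h2 u hu w hwX (Ne.symm hwu)
          have := hdeg w
          omega
        have hsum2 : ∑ w ∈ X.erase u, G.deg w ≤ (X.erase u).card * 2 := by
          have := Finset.sum_le_card_nsmul (X.erase u) (fun w => G.deg w) 2 h4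
          rwa [smul_eq_mul] at this
        have := Finset.sum_erase_add X G.deg hu
        have hcard : (X.erase u).card = X.card - 1 := Finset.card_erase_of_mem hu
        have hx1 : 1 ≤ X.card := Finset.card_pos.mpr ⟨u, hu⟩
        omega
      · push_neg at h3
        have h4 : ∀ w ∈ X, G.deg w ≤ 2 := by
          intro w hw
          have := h3 w hw
          have := hdeg w
          omega
        have h5 : ∑ w ∈ X, G.deg w ≤ X.card * 2 := by
          have := Finset.sum_le_card_nsmul X (fun w => G.deg w) 2 h4
          rwa [smul_eq_mul] at this
        omega
    omega

section Tau
variable {W : Type*} [Fintype W] (K : SimpleGraph W)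

lemma size_le_tauMax (c : K.ConnectedComponent) :
    Nat.card {v : W // K.connectedComponentMk v = c} ≤ K.tauMax := by
  haveI : Finite K.ConnectedComponent := Quot.finite _
  exact le_csSup (Set.Finite.bddAbove (Set.finite_range _)) ⟨c, rfl⟩

lemma one_le_tauMax [Nonempty W] : 1 ≤ K.tauMax := by
  obtain ⟨v⟩ := ‹Nonempty W›
  have h1 : 0 < Nat.card {w : W // K.connectedComponentMk w = K.connectedComponentMk v} := by
    haveI : Nonempty {w : W // K.connectedComponentMk w = K.connectedComponentMk v} :=
      ⟨⟨v, rfl⟩⟩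
    exact Nat.card_pos
  exact le_trans h1 (size_le_tauMax K _)

lemma card_eq_omega_of_tau_le_one (h : K.tauMax ≤ 1) :
    Nat.card W = Nat.card K.ConnectedComponent := by
  apply Nat.card_eq_of_bijective K.connectedComponentMk
  constructor
  · intro u v huv
    by_contra hne
    have h2 : 1 < Nat.card {w : W // K.connectedComponentMk w = K.connectedComponentMk v} := by
      rw [Finite.one_lt_card_iff_nontrivial]
      exact ⟨⟨u, huv⟩, ⟨v, rfl⟩, fun hh => hne (congrArg Subtype.val hh)⟩
    have := size_le_tauMax K (K.connectedComponentMk v)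
    omega
  · intro c
    obtain ⟨v, hv⟩ := c.exists_rep
    exact ⟨v, hv⟩

lemma noedge_facts (hNE : ∀ u v : W, ¬K.Adj u v) :
    Nat.card K.ConnectedComponent = Nat.card W ∧ K.tauMax ≤ 1 := by
  have hsub : ∀ c : K.ConnectedComponent,
      Subsingleton {v : W // K.connectedComponentMk v = c} := by
    intro c
    constructor
    rintro ⟨u, hu⟩ ⟨v, hv⟩
    have : K.Reachable u v := ConnectedComponent.exact (hu.trans hv.symm)
    obtain ⟨w⟩ := this
    cases w with
    | nil => rfl
    | cons h q => exact absurd h (hNE _ _)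
  have htau : K.tauMax ≤ 1 := by
    by_cases hne : Nonempty W
    · apply csSup_le
      · obtain ⟨v⟩ := hne
        exact ⟨_, ⟨K.connectedComponentMk v, rfl⟩⟩
      · rintro n ⟨c, rfl⟩
        haveI := hsub c
        exact Finite.card_le_one_iff_subsingleton.mpr (hsub c)
    · haveI : IsEmpty W := not_nonempty_iff.mp hne
      haveI : IsEmpty K.ConnectedComponent := by
        constructor; intro c; obtain ⟨v, _⟩ := c.exists_rep; exact IsEmpty.false v
      rw [tauMax]
      simp [Set.range_eq_empty]
  exact ⟨(card_eq_omega_of_tau_le_one K htau).symm, htau⟩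

end Tau

lemma tree_adj_dist_parity {G : SimpleGraph V} (hT : G.IsTree) (r : V) {u v : V}
    (h : G.Adj u v) : ¬ (Even (G.dist u r) ↔ Even (G.dist v r)) := by
  classical
  intro hiff
  obtain ⟨pu, hpu, hlu⟩ := hT.isConnected.exists_path_of_dist u r
  obtain ⟨pv, hpv, hlv⟩ := hT.isConnected.exists_path_of_dist v r
  have hsing : (Walk.cons h Walk.nil : G.Walk u v).IsPath := by
    simp [Walk.isPath_def, h.ne]
  by_cases hv : v ∈ pu.support
  · have ht : (pu.takeUntil v hv).IsPath := hpu.takeUntil hv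
    have hd : (pu.dropUntil v hv).IsPath := hpu.dropUntil hv
    have h1 : pu.dropUntil v hv = pv := (hT.existsUnique_path v r).unique hd hpv
    have h2 : pu.takeUntil v hv = Walk.cons h Walk.nil :=
      (hT.existsUnique_path u v).unique ht hsing
    have h3 := congrArg Walk.length (pu.take_spec hv)
    rw [Walk.length_append, h1, h2] at h3
    simp only [Walk.length_cons, Walk.length_nil] at h3
    rw [← hlu, ← hlv, ← h3, Nat.add_comm, Nat.even_add_one] at hiff
    exact iff_not_self hiff.symm
  · have hq : (Walk.cons h.symm pu : G.Walk v r).IsPath :=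
      (Walk.cons_isPath_iff _ _).mpr ⟨hpu, hv⟩
    have h1 : Walk.cons h.symm pu = pv := (hT.existsUnique_path v r).unique hq hpv
    have h3 := congrArg Walk.length h1
    rw [Walk.length_cons] at h3
    rw [← hlu, ← hlv, ← h3, Nat.even_add_one] at hiff
    exact iff_not_self hiff

lemma exists_big_indep [Fintype V] [Nonempty V] {G : SimpleGraph V} (hT : G.IsTree)
    (hodd : Odd (Fintype.card V)) :
    ∃ I : Finset V, Fintype.card V + 1 ≤ 2 * I.card ∧
      ∀ u ∈ I, ∀ v ∈ I, ¬ G.Adj u v := by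
  classical
  obtain ⟨r⟩ := ‹Nonempty V›
  set A := Finset.univ.filter (fun v => Even (G.dist v r)) with hA
  have hAind : ∀ u ∈ A, ∀ v ∈ A, ¬G.Adj u v := by
    intro u hu v hv hadj
    rw [hA, Finset.mem_filter] at hu hv
    exact tree_adj_dist_parity hT r hadj (iff_of_true hu.2 hv.2)
  have hBind : ∀ u ∈ Aᶜ, ∀ v ∈ Aᶜ, ¬G.Adj u v := by
    intro u hu v hv hadj
    rw [Finset.mem_compl, hA, Finset.mem_filter] at hu hv
    push_neg at hu hv
    exact tree_adj_dist_parity hT r hadj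
      (iff_of_false (hu (Finset.mem_univ u)) (hv (Finset.mem_univ v)))
  have hsum : A.card + Aᶜ.card = Fintype.card V := by
    rw [Finset.card_add_card_compl]
  obtain ⟨k, hk⟩ := hodd
  rcases le_or_gt (Fintype.card V + 1) (2 * A.card) with hle | hlt
  · exact ⟨A, hle, hAind⟩
  · exact ⟨Aᶜ, by omega, hBind⟩

end SimpleGraph

theorem tree_odd_good_degrees (n : ℕ) (hodd : Odd n) (hn : 3 ≤ n)
    (G : SimpleGraph (Fin n)) (hT : G.IsTree)
    (hdeg : ∀ v, G.deg v ≤ 3)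
    (hadj : ∀ u v, G.deg u = 3 → G.deg v = 3 → u ≠ v → G.Adj u v) :
    G.tenacity = 1 := by
  classical
  haveI : Nonempty (Fin n) := ⟨⟨0, by omega⟩⟩
  obtain ⟨k, hk⟩ := hodd
  -- Lower bound: any vertex cut X satisfies ω ≤ |X| + τ.
  have hLB : ∀ X : Finset (Fin n), G.IsVertexCut X →
      (G.delVerts X).omegaComp ≤ X.card + (G.delVerts X).tauMax := by
    intro X hX
    have hB := omega_del_le hT hdeg hadj X
    have hNEsub : Nonempty {v : Fin n // v ∉ X} := by
      by_contra hne
      haveI : IsEmpty {v : Fin n // v ∉ X} := not_nonempty_iff.mp hne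
      haveI : IsEmpty (G.delVerts X).ConnectedComponent := ⟨fun c => by
        obtain ⟨v, _⟩ := c.exists_rep; exact IsEmpty.false v⟩
      rw [IsVertexCut, omegaComp] at hX
      simp at hX
    haveI := hNEsub
    have h4 : 1 ≤ (G.delVerts X).tauMax := one_le_tauMax _
    unfold SimpleGraph.IsVertexCut at hX
    unfold SimpleGraph.omegaComp at hX ⊢
    by_cases htau : 2 ≤ (G.delVerts X).tauMax
    · omega
    · have h1 : (G.delVerts X).tauMax ≤ 1 := by omega
      have h2 := card_eq_omega_of_tau_le_one (G.delVerts X) h1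
      have h3 : Nat.card {v : Fin n // v ∉ X} = n - X.card := by
        rw [Nat.card_eq_fintype_card, Fintype.card_subtype_compl]
        simp
      have hXn : X.card ≤ n := by
        have := Finset.card_le_univ X
        simpa using this
      omega
  -- Upper bound: the complement of a big independent set is a cut of ratio 1.
  obtain ⟨I, hIcard, hIind⟩ := exists_big_indep hT (by simpa using ⟨k, hk⟩)
  set X0 : Finset (Fin n) := Iᶜ with hX0
  have hNEadj : ∀ u v : {v : Fin n // v ∉ X0}, ¬ (G.delVerts X0).Adj u v := by
    rintro ⟨u, hu⟩ ⟨v, hv⟩ hadj'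
    rw [hX0, Finset.notMem_compl] at hu hv
    exact hIind u hu v hv hadj'
  obtain ⟨homega, htau⟩ := noedge_facts (G.delVerts X0) hNEadj
  have hWcard : Nat.card {v : Fin n // v ∉ X0} = I.card := by
    rw [Nat.card_eq_fintype_card]
    rw [show (Fintype.card {v : Fin n // v ∉ X0}) = (Finset.univ.filter (fun v => v ∉ X0)).card
      from Fintype.card_subtype _]
    congr 1
    ext v
    simp [hX0]
  have hIn : I.card ≤ n := by
    have := Finset.card_le_univ I
    simpa using this
  have hX0card : X0.card = n - I.card := by
    rw [hX0, Finset.card_compl]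
    simp
  have homega' : (G.delVerts X0).omegaComp = I.card := by
    rw [omegaComp, homega, hWcard]
  have hcut : G.IsVertexCut X0 := by
    rw [IsVertexCut, homega']
    simp at hIcard
    omega
  have htauNE : Nonempty {v : Fin n // v ∉ X0} := by
    rcases Finset.card_pos.mp (show 0 < I.card by simp at hIcard; omega) with ⟨v, hv⟩
    exact ⟨⟨v, by rw [hX0]; simpa using hv⟩⟩
  haveI := htauNE
  have htau1 : (G.delVerts X0).tauMax = 1 := le_antisymm htau (one_le_tauMax _)
  simp only [Fintype.card_fin] at hIcard
  -- the ratio for X0 equals 1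
  have hωτ : X0.card + (G.delVerts X0).tauMax = (G.delVerts X0).omegaComp := by
    have := hLB X0 hcut
    rw [htau1, homega', hX0card] at this ⊢
    omega
  -- assemble the sInf
  set S := { t : ℝ | ∃ X : Finset (Fin n), G.IsVertexCut X ∧
    t = ((X.card : ℝ) + (G.delVerts X).tauMax) / (G.delVerts X).omegaComp } with hS
  have hlb : ∀ t ∈ S, (1 : ℝ) ≤ t := by
    rintro t ⟨X, hX, rfl⟩
    have hω : 0 < ((G.delVerts X).omegaComp : ℝ) := by
      have h0 : 1 < (G.delVerts X).omegaComp := hX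
      exact_mod_cast Nat.zero_lt_of_lt h0
    rw [le_div_iff₀ hω, one_mul]
    have := hLB X hX
    exact_mod_cast this
  have h1S : (1 : ℝ) ∈ S := by
    refine ⟨X0, hcut, ?_⟩
    rw [eq_div_iff, one_mul]
    · push_cast [← hωτ]
      ring
    · have h0 : 1 < (G.delVerts X0).omegaComp := hcut
      have : (0:ℝ) < (G.delVerts X0).omegaComp := by exact_mod_cast Nat.zero_lt_of_lt h0
      exact ne_of_gt this
  rw [tenacity, ← hS]
  exact le_antisymm (csInf_le ⟨1, hlb⟩ h1S) (le_csInf ⟨1, h1S⟩ hlb)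
end

section
/- Among all trees on n vertices (n ≥ 3), the maximum tenacity is 1 if n is odd and (n+2)/n if n is even. -/
open SimpleGraph

set_option linter.unusedSectionVars false

namespace SimpleGraph

/-! ### General counting lemmas -/

section Counting
variable {W : Type*} [Fintype W]

lemma mk_surj {G : SimpleGraph W} : Function.Surjective G.connectedComponentMk :=
  fun c => c.exists_rep

lemma omegaComp_le_card (G : SimpleGraph W) : G.omegaComp ≤ Nat.card W :=
  Nat.card_le_card_of_surjective _ mk_surj

lemma omegaComp_eq_of_edgeless (G : SimpleGraph W) (h : ∀ a b, ¬ G.Adj a b) :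
    G.omegaComp = Nat.card W := by
  have hbot : G = ⊥ := by ext a b; simp [h a b]
  subst hbot
  refine (Nat.card_eq_of_bijective _ ⟨fun a b hab => ?_, mk_surj⟩).symm
  exact reachable_bot.mp (ConnectedComponent.exact hab)

lemma tauMax_eq_one_of_edgeless (G : SimpleGraph W) [Nonempty W]
    (h : ∀ a b, ¬ G.Adj a b) : G.tauMax = 1 := by
  have hbot : G = ⊥ := by ext a b; simp [h a b]
  subst hbot
  have h1 : ∀ c : (⊥ : SimpleGraph W).ConnectedComponent,
      Nat.card {v : W // (⊥ : SimpleGraph W).connectedComponentMk v = c} = 1 := by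
    intro c
    rw [Nat.card_eq_one_iff_unique]
    constructor
    · constructor
      intro a b
      ext
      exact reachable_bot.mp (ConnectedComponent.exact (a.2.trans b.2.symm))
    · obtain ⟨v, hv⟩ := c.exists_rep
      exact ⟨⟨v, hv⟩⟩
  have : (Set.range fun c : (⊥ : SimpleGraph W).ConnectedComponent =>
      Nat.card {v : W // (⊥ : SimpleGraph W).connectedComponentMk v = c}) = {1} := by
    apply Set.eq_singleton_iff_nonempty_unique_mem.mpr
    constructor
    · exact ⟨1, ⟨_, h1 (connectedComponentMk _ (Classical.arbitrary W))⟩⟩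
    · rintro x ⟨c, rfl⟩; exact h1 c
  rw [tauMax, this, csSup_singleton]

lemma fiber_card_le_tauMax (G : SimpleGraph W) (c : G.ConnectedComponent) :
    Nat.card {v : W // G.connectedComponentMk v = c} ≤ G.tauMax := by
  have : Finite G.ConnectedComponent := Quot.finite _
  exact le_csSup ((Set.finite_range _).bddAbove) ⟨c, rfl⟩

lemma one_le_tauMax_s11 (G : SimpleGraph W) [Nonempty W] : 1 ≤ G.tauMax := by
  obtain ⟨v⟩ := ‹Nonempty W›
  refine le_trans ?_ (G.fiber_card_le_tauMax (G.connectedComponentMk v))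
  have : Nonempty {w : W // G.connectedComponentMk w = G.connectedComponentMk v} := ⟨⟨v, rfl⟩⟩
  exact Nat.one_le_iff_ne_zero.mpr (Nat.card_ne_zero.mpr ⟨this, inferInstance⟩)

lemma card_le_tauMax_mul_omegaComp (G : SimpleGraph W) :
    Nat.card W ≤ G.tauMax * G.omegaComp := by
  classical
  letI : Fintype G.ConnectedComponent := Fintype.ofFinite _
  have hsum : Fintype.card W =
      ∑ c : G.ConnectedComponent, (Finset.univ.filter
        (fun v => G.connectedComponentMk v = c)).card := by
    rw [← Finset.card_univ]
    exact Finset.card_eq_sum_card_fiberwise (fun x _ => Finset.mem_univ _)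
  have hle : ∀ c : G.ConnectedComponent,
      (Finset.univ.filter (fun v => G.connectedComponentMk v = c)).card ≤ G.tauMax := by
    intro c
    have := G.fiber_card_le_tauMax c
    rwa [Nat.card_eq_fintype_card, Fintype.card_subtype] at this
  calc Nat.card W = Fintype.card W := Nat.card_eq_fintype_card
    _ ≤ ∑ _c : G.ConnectedComponent, G.tauMax := by
        rw [hsum]; exact Finset.sum_le_sum fun c _ => hle c
    _ = Fintype.card G.ConnectedComponent * G.tauMax := by
        rw [Finset.sum_const, Finset.card_univ, smul_eq_mul]
    _ = G.tauMax * G.omegaComp := by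
        rw [omegaComp, Nat.card_eq_fintype_card, Nat.mul_comm]

end Counting

lemma card_compl_subtype {n : ℕ} (X : Finset (Fin n)) :
    Nat.card {v : Fin n // v ∉ X} = n - X.card := by
  classical
  rw [Nat.card_eq_fintype_card, Fintype.card_subtype]
  have : Finset.univ.filter (fun v : Fin n => v ∉ X) = Xᶜ := by
    ext v; simp
  rw [this, Finset.card_compl, Fintype.card_fin]

/-- Spec for a vertex cut whose removal leaves an edgeless graph. -/
lemma edgeless_cut_spec {n : ℕ} (G : SimpleGraph (Fin n)) (X : Finset (Fin n))
    (hE : ∀ a b : {v : Fin n // v ∉ X}, ¬ (G.delVerts X).Adj a b)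
    (hc : X.card + 2 ≤ n) :
    G.IsVertexCut X ∧ (G.delVerts X).tauMax = 1 ∧
      (G.delVerts X).omegaComp = n - X.card := by
  have hcard : Nat.card {v : Fin n // v ∉ X} = n - X.card := card_compl_subtype X
  have hne : Nonempty {v : Fin n // v ∉ X} := by
    have hpos : 0 < Nat.card {v : Fin n // v ∉ X} := by omega
    exact (Nat.card_pos_iff.mp hpos).1
  have hω : (G.delVerts X).omegaComp = n - X.card := by
    rw [omegaComp_eq_of_edgeless _ hE, hcard]
  exact ⟨by rw [IsVertexCut, hω]; omega, tauMax_eq_one_of_edgeless _ hE, hω⟩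

/-! ### Components of the path graph minus a cut -/

lemma omegaComp_path_del_le {n : ℕ} (hn : 0 < n) (X : Finset (Fin n)) :
    ((pathGraph n).delVerts X).omegaComp ≤ X.card + 1 := by
  classical
  set G' := (pathGraph n).delVerts X with hG'
  letI : Fintype G'.ConnectedComponent := Fintype.ofFinite _
  have hne : ∀ c : G'.ConnectedComponent,
      (Finset.univ.filter (fun v => G'.connectedComponentMk v = c)).Nonempty := by
    intro c
    obtain ⟨v, hv⟩ := c.exists_rep
    exact ⟨v, Finset.mem_filter.mpr ⟨Finset.mem_univ _, hv⟩⟩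
  set m : G'.ConnectedComponent → {v : Fin n // v ∉ X} :=
    fun c => (Finset.univ.filter (fun v => G'.connectedComponentMk v = c)).min' (hne c) with hm
  have hmk : ∀ c, G'.connectedComponentMk (m c) = c := by
    intro c
    have := Finset.min'_mem _ (hne c)
    simpa using this
  have hmin : ∀ c (v : {v : Fin n // v ∉ X}), G'.connectedComponentMk v = c → m c ≤ v := by
    intro c v hv
    exact Finset.min'_le _ _ (by simp [hv])
  have hpred : ∀ c : G'.ConnectedComponent, (m c).1.val ≠ 0 →
      (⟨(m c).1.val - 1, by omega⟩ : Fin n) ∈ X := by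
    intro c h0
    by_contra hp
    set p : {v : Fin n // v ∉ X} := ⟨⟨(m c).1.val - 1, by omega⟩, hp⟩ with hpdef
    have hadj : G'.Adj p (m c) := by
      show (pathGraph n).Adj p.1 (m c).1
      rw [pathGraph_adj]
      left
      show ((m c).1.val - 1) + 1 = (m c).1.val
      omega
    have hc : G'.connectedComponentMk p = c := by
      rw [← hmk c]
      exact ConnectedComponent.eq.mpr hadj.reachable
    have hle := hmin c p hc
    have : (m c).1.val ≤ p.1.val := by exact_mod_cast hle
    have : p.1.val = (m c).1.val - 1 := rfl
    omega
  set F : G'.ConnectedComponent → Fin n := fun c =>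
    if h : (m c).1.val = 0 then (m c).1 else ⟨(m c).1.val - 1, by omega⟩ with hF
  have hFmem : ∀ c, F c ∈ insert (⟨0, hn⟩ : Fin n) X := by
    intro c
    by_cases h : (m c).1.val = 0
    · simp only [hF, dif_pos h]
      have : (m c).1 = (⟨0, hn⟩ : Fin n) := Fin.ext h
      rw [this]
      exact Finset.mem_insert_self _ _
    · simp only [hF, dif_neg h]
      exact Finset.mem_insert_of_mem (hpred c h)
  have hFinj : Function.Injective F := by
    intro c d hcd
    have hmeq : m c = m d → c = d := by
      intro h
      rw [← hmk c, ← hmk d, h]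
    by_cases hc : (m c).1.val = 0 <;> by_cases hd : (m d).1.val = 0
    · exact hmeq (Subtype.ext (Fin.ext (by omega)))
    · exfalso
      simp only [hF, dif_pos hc, dif_neg hd] at hcd
      have := hpred d hd
      rw [← hcd] at this
      exact (m c).2 this
    · exfalso
      simp only [hF, dif_neg hc, dif_pos hd] at hcd
      have := hpred c hc
      rw [hcd] at this
      exact (m d).2 this
    · apply hmeq
      simp only [hF, dif_neg hc, dif_neg hd, Fin.mk.injEq] at hcd
      exact Subtype.ext (Fin.ext (by omega))
  calc G'.omegaComp = Fintype.card G'.ConnectedComponent := Nat.card_eq_fintype_card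
    _ ≤ (insert (⟨0, hn⟩ : Fin n) X).card := by
        rw [← Finset.card_univ]
        exact Finset.card_le_card_of_injOn F (fun c _ => hFmem c) (hFinj.injOn)
    _ ≤ X.card + 1 := Finset.card_insert_le _ _

/-! ### The path graph is a tree -/

lemma pathGraph_cross {n : ℕ} {u v : Fin n} (huv : u.val + 1 = v.val) :
    ∀ {a b : Fin n} (_ : (pathGraph n \ fromEdgeSet {s(u,v)}).Walk a b),
      a.val ≤ u.val → v.val ≤ b.val → False := by
  intro a b w
  induction w with
  | nil => intro h1 h2; omega
  | @cons x y z h p ih =>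
    intro h1 h2
    by_cases hy : y.val ≤ u.val
    · exact ih hy h2
    · rw [sdiff_adj, fromEdgeSet_adj] at h
      obtain ⟨hadj, hne⟩ := h
      rw [pathGraph_adj] at hadj
      have hxu : x = u := Fin.ext (by omega)
      have hyv : y = v := Fin.ext (by omega)
      subst hxu hyv
      simp only [Set.mem_singleton_iff] at hne
      refine hne ⟨trivial, fun he => ?_⟩
      rw [Fin.ext_iff] at he
      omega

lemma pathGraph_isTree {n : ℕ} (hn : 1 ≤ n) : (pathGraph n).IsTree := by
  constructor
  · obtain ⟨m, rfl⟩ : ∃ m, n = m + 1 := ⟨n - 1, by omega⟩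
    exact pathGraph_connected m
  · rw [isAcyclic_iff_forall_adj_isBridge]
    intro u v hadj
    have hsymm : ∀ {u v : Fin n}, u.val + 1 = v.val →
        (pathGraph n).IsBridge s(u, v) := by
      intro u v huv
      rw [isBridge_iff]
      rintro ⟨w⟩
      exact pathGraph_cross huv w (le_refl _) (le_refl _)
    rw [pathGraph_adj] at hadj
    rcases hadj with h | h
    · exact hsymm h
    · rw [Sym2.eq_swap]
      exact hsymm h

/-! ### Trees are bipartite: a small vertex cover exists -/

lemma IsTree.adj_length_parity {V : Type*} {G : SimpleGraph V} (hG : G.IsTree)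
    {r u v : V} (huv : G.Adj u v)
    (p : G.Walk r u) (hp : p.IsPath) (q : G.Walk r v) (hq : q.IsPath) :
    q.length % 2 ≠ p.length % 2 := by
  classical
  have key : q.length = p.length + 1 ∨ p.length = q.length + 1 := by
    by_cases hv : v ∈ p.support
    · right
      have hq' : (p.takeUntil v hv).IsPath := hp.takeUntil hv
      have hqq : q = p.takeUntil v hv := (hG.existsUnique_path r v).unique hq hq'
      have hd : (p.dropUntil v hv).IsPath := hp.dropUntil hv
      have hs : (Path.singleton huv.symm : G.Walk v u).IsPath := (Path.singleton huv.symm).2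
      have hds : p.dropUntil v hv = (Path.singleton huv.symm : G.Walk v u) :=
        (hG.existsUnique_path v u).unique hd hs
      have hlen := congrArg Walk.length (p.take_spec hv)
      rw [Walk.length_append, hds] at hlen
      have : (Path.singleton huv.symm : G.Walk v u).length = 1 := by
        simp [Path.singleton]
      rw [this, ← hqq] at hlen
      omega
    · left
      have hp' : (p.concat huv).IsPath := by
        rw [← Walk.isPath_reverse_iff, Walk.reverse_concat]
        rw [Walk.cons_isPath_iff]
        refine ⟨hp.reverse, ?_⟩
        rwa [Walk.support_reverse, List.mem_reverse]
      have : q = p.concat huv := (hG.existsUnique_path r v).unique hq hp'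
      rw [this, Walk.length_concat]
  omega

lemma IsTree.exists_small_cover {n : ℕ} (hn : 3 ≤ n) {G : SimpleGraph (Fin n)}
    (hG : G.IsTree) :
    ∃ X : Finset (Fin n), 2 * X.card ≤ n ∧
      ∀ a b : {v : Fin n // v ∉ X}, ¬ (G.delVerts X).Adj a b := by
  classical
  set r : Fin n := ⟨0, by omega⟩
  set c : Fin n → Bool := fun v => decide ((hG.existsUnique_path r v).choose.length % 2 = 1)
    with hc
  have hvalid : ∀ {u v : Fin n}, G.Adj u v → c u ≠ c v := by
    intro u v huv
    have hp := (hG.existsUnique_path r u).choose_spec.1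
    have hq := (hG.existsUnique_path r v).choose_spec.1
    have := hG.adj_length_parity huv _ hp _ hq
    simp only [hc, ne_eq, decide_eq_decide]
    omega
  have hsplit : (Finset.univ.filter (fun v => c v = true)).card
      + (Finset.univ.filter (fun v => c v = false)).card = n := by
    have := Finset.card_filter_add_card_filter_not
      (s := (Finset.univ : Finset (Fin n))) (p := fun v => c v = true)
    simp only [Finset.card_univ, Fintype.card_fin] at this
    have heq : (Finset.filter (fun v => c v = false) Finset.univ)
        = (Finset.filter (fun a => ¬c a = true) Finset.univ) := by
      ext x
      simp
    rw [heq]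
    exact this
  have key : ∀ (b : Bool), ∀ a a' : {v : Fin n // v ∉ Finset.univ.filter (fun v => c v = b)},
      ¬ (G.delVerts (Finset.univ.filter (fun v => c v = b))).Adj a a' := by
    intro b a a' hadj
    have h1 : c a.1 ≠ b := by have := a.2; simpa using this
    have h2 : c a'.1 ≠ b := by have := a'.2; simpa using this
    have : G.Adj a.1 a'.1 := hadj
    have := hvalid this
    revert h1 h2 this
    cases (c a.1) <;> cases (c a'.1) <;> cases b <;> simp
  by_cases hle : (Finset.univ.filter (fun v => c v = true)).card
      ≤ (Finset.univ.filter (fun v => c v = false)).card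
  · exact ⟨_, by omega, key true⟩
  · exact ⟨_, by omega, key false⟩

/-! ### Arithmetic lemmas -/

lemma arith_even (n k w t : ℕ) (hEven : Even n) (hw2 : 2 ≤ w)
    (hwk : w ≤ k + 1) (ht : 1 ≤ t) (hwt : n - k ≤ t * w) (hwn : w ≤ n - k) :
    (n + 2) * w ≤ n * (k + t) := by
  obtain ⟨m, hm⟩ := hEven
  have hkn : k + w ≤ n := by omega
  obtain ⟨d, hd⟩ : ∃ d, k + w + d = n := ⟨n - k - w, by omega⟩
  rcases Nat.lt_or_ge t 2 with h2 | h2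
  · have ht1 : t = 1 := by omega
    subst ht1
    have hw : w = n - k := by omega
    have h1 : n ≤ 2 * k := by omega
    nlinarith
  · rcases Nat.lt_or_ge (n * t) (n + 2 * k + 2) with h3 | h3
    · have hnt : n * t = 2 * (m * t) := by rw [hm]; ring
      have h4 : n * t ≤ n + 2 * k := by omega
      nlinarith
    · nlinarith

lemma ratio_le_val {n k : ℕ} (hn : 3 ≤ n) (h2k : 2 * k ≤ n) :
    ((k : ℝ) + 1) / ((n : ℝ) - (k : ℝ)) ≤ (if Odd n then (1:ℝ) else ((n : ℝ) + 2) / n) := by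
  have hkn : k < n := by omega
  have hpos : (0:ℝ) < (n:ℝ) - k := by
    have : (k:ℝ) < n := by exact_mod_cast hkn
    linarith
  have hc : 2 * (k:ℝ) ≤ n := by exact_mod_cast h2k
  split_ifs with hodd
  · rw [div_le_one hpos]
    have h1 : 2 * k + 1 ≤ n := by
      rcases hodd with ⟨m, hm⟩; omega
    have : 2 * (k:ℝ) + 1 ≤ n := by exact_mod_cast h1
    linarith
  · rw [div_le_div_iff₀ hpos (by positivity)]
    nlinarith

/-! ### Tenacity bounds -/

lemma tenacity_set_bddBelow {V : Type*} [Fintype V] (G : SimpleGraph V) :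
    BddBelow { t : ℝ | ∃ X : Finset V, G.IsVertexCut X ∧
      t = ((X.card : ℝ) + (G.delVerts X).tauMax) / (G.delVerts X).omegaComp } := by
  refine ⟨0, ?_⟩
  rintro t ⟨X, hX, rfl⟩
  positivity

lemma path_ratio_ge {n : ℕ} (hn : 3 ≤ n) (X : Finset (Fin n))
    (hX : (pathGraph n).IsVertexCut X) :
    (if Odd n then (1:ℝ) else ((n : ℝ) + 2) / n) ≤
      ((X.card : ℝ) + ((pathGraph n).delVerts X).tauMax) /
        ((pathGraph n).delVerts X).omegaComp := by
  set G' := (pathGraph n).delVerts X with hG'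
  set k := X.card with hk
  set w := G'.omegaComp with hw
  set t := G'.tauMax with htt
  have hw2 : 2 ≤ w := hX
  have hwk : w ≤ k + 1 := omegaComp_path_del_le (by omega) X
  have hcard : Nat.card {v : Fin n // v ∉ X} = n - k := card_compl_subtype X
  have hwn : w ≤ n - k := hcard ▸ omegaComp_le_card _
  have hne : Nonempty {v : Fin n // v ∉ X} := by
    have hpos : 0 < Nat.card {v : Fin n // v ∉ X} := by omega
    exact (Nat.card_pos_iff.mp hpos).1
  have ht : 1 ≤ t := one_le_tauMax_s11 _
  have hwt : n - k ≤ t * w := hcard ▸ card_le_tauMax_mul_omegaComp _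
  have hwpos : (0:ℝ) < (w:ℝ) := by
    have : (0:ℕ) < w := by omega
    exact_mod_cast this
  split_ifs with hodd
  · rw [le_div_iff₀ hwpos]
    have hnat : w ≤ k + t := by omega
    have : (w:ℝ) ≤ (k:ℝ) + t := by exact_mod_cast hnat
    linarith
  · have hneven : Even n := Nat.not_odd_iff_even.mp hodd
    have harith := arith_even n k w t hneven hw2 hwk ht hwt hwn
    rw [div_le_div_iff₀ (by positivity) hwpos]
    have hcast : ((n:ℝ) + 2) * w ≤ (n:ℝ) * ((k:ℝ) + t) := by exact_mod_cast harith
    linarith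

/-- The tenacity of the path graph. -/
lemma tenacity_pathGraph {n : ℕ} (hn : 3 ≤ n) :
    (pathGraph n).tenacity = (if Odd n then (1:ℝ) else ((n : ℝ) + 2) / n) := by
  classical
  set X₀ : Finset (Fin n) := Finset.univ.filter (fun v : Fin n => v.val % 2 = 1) with hX₀
  have hE : ∀ a b : {v : Fin n // v ∉ X₀}, ¬ ((pathGraph n).delVerts X₀).Adj a b := by
    intro a b hadj
    have h1 : ¬ (a.1.val % 2 = 1) := by have := a.2; simpa [hX₀] using this
    have h2 : ¬ (b.1.val % 2 = 1) := by have := b.2; simpa [hX₀] using this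
    have hpa : (pathGraph n).Adj a.1 b.1 := hadj
    rw [pathGraph_adj] at hpa
    omega
  have h2k : 2 * X₀.card ≤ n := by
    have hinj : X₀.card ≤ (Finset.univ.filter (fun v : Fin n => ¬ v.val % 2 = 1)).card := by
      apply Finset.card_le_card_of_injOn
        (fun v => (⟨v.val - 1, lt_of_le_of_lt (Nat.sub_le _ _) v.isLt⟩ : Fin n))
      · intro v hv
        simp only [hX₀, Finset.coe_filter, Set.mem_setOf_eq, Finset.mem_filter, Finset.mem_univ, true_and] at hv ⊢
        omega
      · intro v hv w hw hvw
        simp only [hX₀, Finset.coe_filter, Set.mem_setOf_eq] at hv hw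
        rw [Fin.mk.injEq] at hvw
        exact Fin.ext (by omega)
    have hsplit := Finset.card_filter_add_card_filter_not
      (s := (Finset.univ : Finset (Fin n))) (p := fun v : Fin n => v.val % 2 = 1)
    simp only [Finset.card_univ, Fintype.card_fin] at hsplit
    have hxx : X₀.card = (Finset.univ.filter (fun v : Fin n => v.val % 2 = 1)).card := by
      rw [hX₀]
    omega
  obtain ⟨hcut, hτ, hω⟩ := edgeless_cut_spec _ X₀ hE (by omega)
  apply le_antisymm
  · refine le_trans (csInf_le (tenacity_set_bddBelow _) ⟨X₀, hcut, rfl⟩) ?_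
    rw [hτ, hω]
    have hcast : (((n - X₀.card : ℕ)) : ℝ) = (n : ℝ) - X₀.card := by
      have : X₀.card ≤ n := by omega
      push_cast [Nat.cast_sub this]
      ring
    rw [hcast]
    push_cast
    exact ratio_le_val hn h2k
  · rw [SimpleGraph.tenacity]
    refine le_csInf ⟨((X₀.card : ℝ) + ((pathGraph n).delVerts X₀).tauMax) /
      ((pathGraph n).delVerts X₀).omegaComp, ⟨X₀, hcut, rfl⟩⟩ ?_
    rintro b ⟨X, hX, rfl⟩
    exact path_ratio_ge hn X hX

/-- Every tree on `n ≥ 3` vertices has tenacity at most the claimed value. -/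
lemma tenacity_le_val {n : ℕ} (hn : 3 ≤ n) {G : SimpleGraph (Fin n)} (hG : G.IsTree) :
    G.tenacity ≤ (if Odd n then (1:ℝ) else ((n : ℝ) + 2) / n) := by
  obtain ⟨X, h2k, hE⟩ := hG.exists_small_cover hn
  have hk2 : X.card + 2 ≤ n := by omega
  obtain ⟨hcut, hτ, hω⟩ := edgeless_cut_spec G X hE hk2
  refine le_trans (csInf_le (tenacity_set_bddBelow _) ⟨X, hcut, rfl⟩) ?_
  rw [hτ, hω]
  have hcast : (((n - X.card : ℕ)) : ℝ) = (n : ℝ) - X.card := by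
    have : X.card ≤ n := by omega
    push_cast [Nat.cast_sub this]
    ring
  rw [hcast]
  push_cast
  exact ratio_le_val hn h2k

end SimpleGraph

theorem max_tenacity_trees (n : ℕ) (hn : 3 ≤ n) :
    IsGreatest {t : ℝ | ∃ G : SimpleGraph (Fin n), G.IsTree ∧ t = G.tenacity}
      (if Odd n then 1 else ((n : ℝ) + 2) / n) := by
  constructor
  · exact ⟨pathGraph n, pathGraph_isTree (by omega), (tenacity_pathGraph hn).symm⟩
  · rintro t ⟨G, hG, rfl⟩
    exact tenacity_le_val hn hG
end

section
/- If G is a unicyclic graph on n vertices containing a vertex of degree at least 4, then T(G) ≤ 1. -/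
open SimpleGraph

-- iso transfer lemmas
lemma omega_iso {V W : Type*} {G : SimpleGraph V} {G' : SimpleGraph W} (φ : G ≃g G') :
    G.omegaComp = G'.omegaComp :=
  Nat.card_congr φ.connectedComponentEquiv

lemma tau_iso {V W : Type*} {G : SimpleGraph V} {G' : SimpleGraph W} (φ : G ≃g G') :
    G.tauMax = G'.tauMax := by
  unfold SimpleGraph.tauMax
  have h1 : (fun c : G.ConnectedComponent =>
      Nat.card {v : V // G.connectedComponentMk v = c}) =
      (fun c' : G'.ConnectedComponent =>
        Nat.card {v : W // G'.connectedComponentMk v = c'}) ∘ φ.connectedComponentEquiv := by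
    funext c
    exact Nat.card_congr (SimpleGraph.ConnectedComponent.isoEquivSupp φ c)
  rw [h1, Function.Surjective.range_comp φ.connectedComponentEquiv.surjective]

-- iso between H.delVerts ∅ and H
def delEmptyIso {W : Type*} (H : SimpleGraph W) : H.delVerts (∅ : Finset W) ≃g H :=
  ⟨Equiv.subtypeUnivEquiv (fun v => Finset.notMem_empty v), Iff.rfl⟩

-- embedding of subtype
def valEmb {W : Type*} (X : Finset W) : {v : W // v ∉ X} ↪ W :=
  ⟨Subtype.val, Subtype.val_injective⟩

-- double delete iso
def delDelIso {W : Type*} [DecidableEq W] (H : SimpleGraph W) (w : W)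
    (X' : Finset {u : W // u ∉ ({w} : Finset W)}) :
    H.delVerts (insert w (X'.map (valEmb _))) ≃g (H.delVerts {w}).delVerts X' where
  toFun := fun p =>
    ⟨⟨p.1, by
        have := p.2
        simp only [Finset.mem_insert, not_or] at this
        simpa using this.1⟩, by
      intro hmem
      exact p.2 (Finset.mem_insert_of_mem (Finset.mem_map_of_mem (valEmb _) hmem))⟩
  invFun := fun q =>
    ⟨q.1.1, by
      simp only [Finset.mem_insert, not_or]
      constructor
      · have := q.1.2; simpa using this
      · intro hmem
        obtain ⟨a, ha, hav⟩ := Finset.mem_map.mp hmem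
        have : a = q.1 := Subtype.ext hav
        exact q.2 (this ▸ ha)⟩
  left_inv := fun p => rfl
  right_inv := fun q => rfl
  map_rel_iff' := Iff.rfl

-- edge split lemma
lemma edge_split {W : Type*} [Fintype W] (H : SimpleGraph W) (w : W) :
    Nat.card H.edgeSet = Nat.card (H.delVerts {w}).edgeSet + Nat.card (H.neighborSet w) := by
  classical
  let emb : (H.delVerts {w}) ↪g H := SimpleGraph.Embedding.comap (valEmb {w}) H
  let g : (H.delVerts {w}).edgeSet ⊕ (H.neighborSet w) → H.edgeSet :=
    Sum.elim (fun e => emb.mapEdgeSet e) (fun u => ⟨s(w, u.1), u.2⟩)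
  have hbij : Function.Bijective g := by
    constructor
    · rintro (a | u) (b | u') hab
      · exact congrArg Sum.inl (emb.mapEdgeSet.injective (Subtype.ext (Subtype.ext_iff.mp hab)))
      · exfalso
        have hval : Sym2.map emb a.1 = s(w, u'.1) := Subtype.ext_iff.mp hab
        have hw : w ∈ Sym2.map emb a.1 := by rw [hval]; exact Sym2.mem_mk_left _ _
        obtain ⟨x, _, hx⟩ := Sym2.mem_map.mp hw
        have hx' : (x : W) = w := hx
        exact (by simpa using x.2 : ¬(x : W) = w) hx'
      · exfalso
        have hval : s(w, u.1) = Sym2.map emb b.1 := Subtype.ext_iff.mp hab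
        have hw : w ∈ Sym2.map emb b.1 := by rw [← hval]; exact Sym2.mem_mk_left _ _
        obtain ⟨x, _, hx⟩ := Sym2.mem_map.mp hw
        have hx' : (x : W) = w := hx
        exact (by simpa using x.2 : ¬(x : W) = w) hx'
      · have : s(w, u.1) = s(w, u'.1) := Subtype.ext_iff.mp hab
        exact congrArg Sum.inr (Subtype.ext ((Sym2.congr_right).mp this))
    · rintro ⟨e, he⟩
      induction e with
      | _ a b =>
        rw [SimpleGraph.mem_edgeSet] at he
        by_cases ha : a = w
        · subst ha
          exact ⟨Sum.inr ⟨b, he⟩, rfl⟩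
        · by_cases hb : b = w
          · subst hb
            exact ⟨Sum.inr ⟨a, he.symm⟩, Subtype.ext (Sym2.eq_swap)⟩
          · refine ⟨Sum.inl ⟨s(⟨a, by simpa using ha⟩, ⟨b, by simpa using hb⟩), he⟩, ?_⟩
            apply Subtype.ext
            show Sym2.map emb s(⟨a, _⟩, ⟨b, _⟩) = s(a, b)
            rw [Sym2.map_pair_eq]
            rfl
  rw [← Nat.card_sum]
  exact (Nat.card_eq_of_bijective g hbij).symm

lemma reach_small {W : Type*} [Fintype W] {H : SimpleGraph W}
    (hdeg : ∀ v, Nat.card (H.neighborSet v) ≤ 1) {u v : W} (h : H.Reachable u v) :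
    u = v ∨ H.Adj u v := by
  obtain ⟨p⟩ := h
  induction p with
  | nil => exact Or.inl rfl
  | @cons a b c hadj q ih =>
    rcases ih with rfl | hbc
    · exact Or.inr hadj
    · left
      have h1 : a ∈ H.neighborSet b := hadj.symm
      have h2 : c ∈ H.neighborSet b := hbc
      have hle : (H.neighborSet b).ncard ≤ 1 := by
        rw [← Nat.card_coe_set_eq]; exact hdeg b
      exact (Set.ncard_le_one_iff (Set.toFinite _)).mp hle h1 h2

lemma case1 {W : Type*} [Fintype W] (H : SimpleGraph W)
    (hdeg : ∀ v, Nat.card (H.neighborSet v) ≤ 1) :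
    H.tauMax ≤ 2 ∧ Nat.card W ≤ H.omegaComp + Nat.card H.edgeSet := by
  classical
  constructor
  · refine csSup_le' ?_
    rintro x ⟨c, rfl⟩
    dsimp only
    induction c using SimpleGraph.ConnectedComponent.ind with
    | _ r =>
      have h1 : Nat.card {v : W // H.connectedComponentMk v = H.connectedComponentMk r}
          = ({v : W | H.connectedComponentMk v = H.connectedComponentMk r}).ncard :=
        Nat.card_coe_set_eq _
      rw [h1]
      have hsub : {v : W | H.connectedComponentMk v = H.connectedComponentMk r}
          ⊆ insert r (H.neighborSet r) := by
        intro v hv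
        rcases reach_small hdeg (SimpleGraph.ConnectedComponent.eq.mp hv) with rfl | hadj
        · exact Set.mem_insert _ _
        · exact Set.mem_insert_of_mem _ hadj.symm
      calc ({v : W | H.connectedComponentMk v = H.connectedComponentMk r}).ncard
          ≤ (insert r (H.neighborSet r)).ncard := Set.ncard_le_ncard hsub (Set.toFinite _)
        _ ≤ (H.neighborSet r).ncard + 1 := Set.ncard_insert_le _ _
        _ ≤ 1 + 1 := by
            have := hdeg r
            rw [← Nat.card_coe_set_eq]
            omega
  · letI : LinearOrder W := LinearOrder.lift' (Fintype.equivFin W) (Equiv.injective _)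
    set f : W → H.ConnectedComponent ⊕ H.edgeSet := fun v =>
      if h : ∃ u, H.Adj v u ∧ u < v then
        Sum.inr ⟨s(v, Classical.choose h), (Classical.choose_spec h).1⟩
      else Sum.inl (H.connectedComponentMk v) with hf
    have hinj : Function.Injective f := by
      intro v v' heq
      by_cases h : ∃ u, H.Adj v u ∧ u < v <;> by_cases h' : ∃ u, H.Adj v' u ∧ u < v'
      · rw [hf] at heq; simp only [dif_pos h, dif_pos h'] at heq
        have hs : s(v, Classical.choose h) = s(v', Classical.choose h') :=
          Subtype.ext_iff.mp (Sum.inr.inj heq)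
        rcases Sym2.eq_iff.mp hs with ⟨h1, _⟩ | ⟨h1, h2⟩
        · exact h1
        · exfalso
          have ha := (Classical.choose_spec h).2
          have hb := (Classical.choose_spec h').2
          rw [← h1, ← h2] at hb
          exact lt_irrefl _ (ha.trans hb)
      · rw [hf] at heq; simp only [dif_pos h, dif_neg h'] at heq
        exact absurd heq (by simp)
      · rw [hf] at heq; simp only [dif_neg h, dif_pos h'] at heq
        exact absurd heq (by simp)
      · rw [hf] at heq; simp only [dif_neg h, dif_neg h'] at heq
        have hmk := Sum.inl.inj heq
        rcases reach_small hdeg (SimpleGraph.ConnectedComponent.eq.mp hmk) with h1 | h1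
        · exact h1
        · exfalso
          rcases lt_or_gt_of_ne h1.ne with hlt | hlt
          · exact h' ⟨v, h1.symm, hlt⟩
          · exact h ⟨v', h1, hlt⟩
    have hle := Nat.card_le_card_of_injective f hinj
    rw [Nat.card_sum] at hle
    exact hle

lemma card_compl_singleton {W : Type*} [Fintype W] (w : W) :
    Nat.card {u : W // u ∉ ({w} : Finset W)} + 1 = Nat.card W := by
  classical
  have h := Nat.card_congr (Equiv.sumCompl (fun u => u ∈ ({w} : Finset W)))
  rw [Nat.card_sum] at h
  have h1 : Nat.card {u : W // u ∈ ({w} : Finset W)} = 1 := by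
    rw [Nat.card_eq_finsetCard]
    exact Finset.card_singleton w
  omega

lemma lemB : ∀ (N : ℕ) (W : Type) [Fintype W] (H : SimpleGraph W), Nat.card W ≤ N →
    ∃ X : Finset W, (H.delVerts X).tauMax ≤ 2 ∧
      X.card + Nat.card W ≤ (H.delVerts X).omegaComp + Nat.card H.edgeSet := by
  intro N
  induction N with
  | zero =>
    intro W _ H hc
    refine ⟨∅, ?_, ?_⟩
    · rw [tau_iso (delEmptyIso H)]
      exact (case1 H (fun v => by
        have : Nat.card W = 0 := Nat.le_zero.mp hc
        have : IsEmpty W := by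
          rw [Nat.card_eq_fintype_card] at this
          exact Fintype.card_eq_zero_iff.mp this
        exact (this.false v).elim)).1
    · simp only [Finset.card_empty, zero_add]
      rw [omega_iso (delEmptyIso H)]
      have hW : Nat.card W = 0 := Nat.le_zero.mp hc
      omega
  | succ N ih =>
    intro W _ H hc
    classical
    by_cases hw : ∃ w : W, 2 ≤ Nat.card (H.neighborSet w)
    · obtain ⟨w, hw2⟩ := hw
      have hcard := card_compl_singleton w
      obtain ⟨X', hτ, hω⟩ := ih {u : W // u ∉ ({w} : Finset W)} (H.delVerts {w}) (by omega)
      refine ⟨insert w (X'.map (valEmb _)), ?_, ?_⟩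
      · rw [tau_iso (delDelIso H w X')]; exact hτ
      · rw [omega_iso (delDelIso H w X')]
        have hX : (insert w (X'.map (valEmb _))).card = X'.card + 1 := by
          rw [Finset.card_insert_of_notMem, Finset.card_map]
          intro hmem
          obtain ⟨a, _, hav⟩ := Finset.mem_map.mp hmem
          exact (by simpa using a.2 : ¬(a : W) = w) hav
        have hE := edge_split H w
        omega
    · push_neg at hw
      refine ⟨∅, ?_, ?_⟩
      · rw [tau_iso (delEmptyIso H)]
        exact (case1 H (fun v => by have := hw v; omega)).1
      · simp only [Finset.card_empty, zero_add]
        rw [omega_iso (delEmptyIso H)]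
        exact (case1 H (fun v => by have := hw v; omega)).2


theorem unicyclic_degree_four (n : ℕ) (G : SimpleGraph (Fin n))
    (hG : G.Unicyclic) (h : ∃ v, 4 ≤ G.deg v) :
    G.tenacity ≤ 1 := by
  classical
  obtain ⟨v, hv⟩ := h
  obtain ⟨-, hE⟩ := hG
  obtain ⟨X', hτ, hω⟩ := lemB (Nat.card {u : Fin n // u ∉ ({v} : Finset (Fin n))})
    {u : Fin n // u ∉ ({v} : Finset (Fin n))} (G.delVerts {v}) le_rfl
  set X : Finset (Fin n) := insert v (X'.map (valEmb _)) with hXdef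
  have hiso := delDelIso G v X'
  have hτ2 : (G.delVerts X).tauMax ≤ 2 := by rw [tau_iso hiso]; exact hτ
  have hωeq : (G.delVerts X).omegaComp = ((G.delVerts {v}).delVerts X').omegaComp :=
    omega_iso hiso
  have hXcard : X.card = X'.card + 1 := by
    rw [hXdef, Finset.card_insert_of_notMem, Finset.card_map]
    intro hmem
    obtain ⟨a, _, hav⟩ := Finset.mem_map.mp hmem
    exact (by simpa using a.2 : ¬(a : Fin n) = v) hav
  have hsplit := edge_split G v
  have hcc := card_compl_singleton v
  have hn : Nat.card (Fin n) = n := by simp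
  have hdeg : 4 ≤ Nat.card (G.neighborSet v) := hv
  have hEn : Nat.card G.edgeSet = n := by rw [hE]; simp
  have hkey : X'.card + 3 ≤ ((G.delVerts {v}).delVerts X').omegaComp := by omega
  have hcut : G.IsVertexCut X := by
    unfold SimpleGraph.IsVertexCut
    rw [hωeq]
    omega
  have homega_pos : 0 < (G.delVerts X).omegaComp := by rw [hωeq]; omega
  have hsum : X.card + (G.delVerts X).tauMax ≤ (G.delVerts X).omegaComp := by
    rw [hωeq]; omega
  have hle1 : ((X.card : ℝ) + (G.delVerts X).tauMax) / (G.delVerts X).omegaComp ≤ 1 := by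
    rw [div_le_one (by exact_mod_cast homega_pos)]
    exact_mod_cast hsum
  refine csInf_le_of_le ?_ ⟨X, hcut, rfl⟩ hle1
  refine ⟨0, ?_⟩
  rintro t ⟨Y, -, rfl⟩
  exact div_nonneg (add_nonneg (Nat.cast_nonneg _) (Nat.cast_nonneg _)) (Nat.cast_nonneg _)
end

section
/- If G is a unicyclic graph containing two nonadjacent vertices of degree 3, then T(G) ≤ 1. -/
open SimpleGraph

set_option linter.unusedSectionVars false
set_option maxHeartbeats 1000000

open Finset

noncomputable section Aux
open scoped Classical

namespace TenAux

variable {V : Type*} [Fintype V] [DecidableEq V] (G : SimpleGraph V)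

/-- number of neighbours of `w` inside `s` -/
def degIn (s : Finset V) (w : V) : ℕ := (s.filter (fun y => G.Adj w y)).card

/-- the edges of `G` as a finset -/
def eFin : Finset (Sym2 V) := G.edgeSet.toFinite.toFinset

/-- number of edges of `G` with both endpoints in `s` -/
def eIn (s : Finset V) : ℕ := ((eFin G).filter (fun e => ∀ x ∈ e, x ∈ s)).card

lemma mem_eFin {e : Sym2 V} : e ∈ eFin G ↔ e ∈ G.edgeSet := Set.Finite.mem_toFinset _

lemma degIn_mono {s t : Finset V} (h : s ⊆ t) (w : V) : degIn G s w ≤ degIn G t w :=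
  Finset.card_le_card (Finset.filter_subset_filter _ h)

lemma degIn_eq_sum (s : Finset V) (w : V) :
    degIn G s w = ∑ y ∈ s, (if G.Adj w y then 1 else 0) := by
  rw [degIn, Finset.card_filter]

lemma degIn_insert {Y : Finset V} {z : V} (hz : z ∉ Y) (w : V) :
    degIn G (insert z Y) w = degIn G Y w + (if G.Adj w z then 1 else 0) := by
  rw [degIn_eq_sum, degIn_eq_sum, Finset.sum_insert hz, add_comm]

lemma degIn_erase {s : Finset V} {z : V} (hz : z ∈ s) (w : V) :
    degIn G s w = degIn G (s.erase z) w + (if G.Adj w z then 1 else 0) := by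
  conv_lhs => rw [← Finset.insert_erase hz]
  rw [degIn_insert G (Finset.notMem_erase _ _)]

lemma degIn_union {s t : Finset V} (h : Disjoint s t) (w : V) :
    degIn G (s ∪ t) w = degIn G s w + degIn G t w := by
  rw [degIn_eq_sum, degIn_eq_sum, degIn_eq_sum, Finset.sum_union h]

lemma sum_comm' (s t : Finset V) :
    ∑ x ∈ s, degIn G t x = ∑ x ∈ t, degIn G s x := by
  simp only [degIn_eq_sum]
  rw [Finset.sum_comm]
  congr 1; ext x; congr 1; ext y
  simp [G.adj_comm]

lemma sum_degIn_erase {s : Finset V} (A : Finset V) {l : V} (hl : l ∈ s) :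
    ∑ x ∈ A, degIn G s x = (∑ x ∈ A, degIn G (s.erase l) x) + degIn G A l := by
  have : ∀ x ∈ A, degIn G s x = degIn G (s.erase l) x + (if G.Adj x l then 1 else 0) :=
    fun x _ => degIn_erase G hl x
  rw [Finset.sum_congr rfl this, Finset.sum_add_distrib]
  congr 1
  rw [degIn_eq_sum]
  congr 1; ext x; simp [G.adj_comm]

/-- the restriction of `G` to `s`, as a graph on `V` -/
def rest (s : Finset V) : SimpleGraph V where
  Adj a b := G.Adj a b ∧ a ∈ s ∧ b ∈ s
  symm := by constructor; intro a b ⟨h1, h2, h3⟩; exact ⟨h1.symm, h3, h2⟩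
  loopless := by constructor; intro a ⟨h1, _⟩; exact G.loopless.irrefl a h1

lemma rest_edgeFinset (s : Finset V) :
    (rest G s).edgeFinset = (eFin G).filter (fun e => ∀ x ∈ e, x ∈ s) := by
  ext e
  induction e with
  | _ a b =>
    simp only [mem_edgeFinset, Finset.mem_filter, mem_eFin, mem_edgeSet, Sym2.mem_iff]
    constructor
    · rintro ⟨h1, h2, h3⟩
      exact ⟨h1, by rintro x (rfl | rfl) <;> assumption⟩
    · rintro ⟨h1, h2⟩
      exact ⟨h1, h2 a (Or.inl rfl), h2 b (Or.inr rfl)⟩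

lemma rest_degree (s : Finset V) (w : V) (hw : w ∈ s) :
    (rest G s).degree w = degIn G s w := by
  rw [← card_neighborFinset_eq_degree]
  congr 1
  ext y
  simp only [mem_neighborFinset, Finset.mem_filter]
  change (G.Adj w y ∧ w ∈ s ∧ y ∈ s) ↔ _
  tauto

lemma rest_degree_zero (s : Finset V) (w : V) (hw : w ∉ s) :
    (rest G s).degree w = 0 := by
  rw [← card_neighborFinset_eq_degree, Finset.card_eq_zero]
  ext y
  simp only [mem_neighborFinset, Finset.notMem_empty, iff_false]
  rintro ⟨_, h2, _⟩; exact hw h2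

lemma handshake (s : Finset V) : ∑ w ∈ s, degIn G s w = 2 * eIn G s := by
  have h1 : ∑ w, (rest G s).degree w = 2 * ((rest G s).edgeFinset).card :=
    SimpleGraph.sum_degrees_eq_twice_card_edges _
  rw [← Finset.sum_subset (Finset.subset_univ s) (fun x _ hx => rest_degree_zero G s x hx)] at h1
  rw [Finset.sum_congr rfl (fun x hx => rest_degree G s x hx)] at h1
  rw [h1, rest_edgeFinset]
  rfl

lemma eIn_insert {Y : Finset V} {z : V} (hz : z ∉ Y) :
    eIn G (insert z Y) = eIn G Y + degIn G Y z := by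
  have h1 := handshake G (insert z Y)
  rw [Finset.sum_insert hz] at h1
  have h2 : ∀ w ∈ Y, degIn G (insert z Y) w = degIn G Y w + (if G.Adj w z then 1 else 0) :=
    fun w _ => degIn_insert G hz w
  rw [Finset.sum_congr rfl h2, Finset.sum_add_distrib] at h1
  have h3 : ∑ w ∈ Y, (if G.Adj w z then 1 else 0) = degIn G Y z := by
    rw [degIn_eq_sum]; congr 1; ext x; simp [G.adj_comm]
  have h4 : degIn G (insert z Y) z = degIn G Y z := by
    rw [degIn_insert G hz z]; simp
  rw [h3, h4, handshake G Y] at h1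
  omega

lemma eIn_empty : eIn G ∅ = 0 := by
  rw [eIn, Finset.card_eq_zero, Finset.filter_eq_empty_iff]
  intro e he
  induction e with
  | _ a b => intro h; simpa using h a

/-- The main combinatorial construction. -/
lemma main (Hf : ∀ t : Finset V, t.Nonempty →
      (∃ w ∈ t, degIn G t w ≤ 1) ∨ (∀ w ∈ t, degIn G t w = 2)) :
    ∀ (k : ℕ) (s U : Finset V), s.card ≤ k → U ⊆ s →
      (∀ a ∈ U, ∀ b ∈ U, ¬ G.Adj a b) →
    ∃ X : Finset V, U ⊆ X ∧ X ⊆ s ∧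
      (∀ w ∈ s \ X, degIn G (s \ X) w ≤ 1) ∧
      (∀ x ∈ X \ U, 2 ≤ degIn G s x) ∧
      (eIn G X + 2 * (X \ U).card ≤ ∑ x ∈ X \ U, degIn G s x) := by
  intro k
  induction k with
  | zero =>
    intro s U hcard hUs _
    have hs : s = ∅ := Finset.card_eq_zero.mp (Nat.le_zero.mp hcard)
    subst hs
    have hU : U = ∅ := Finset.subset_empty.mp hUs
    subst hU
    exact ⟨∅, by simp, by simp, by simp, by simp, by simp [eIn_empty]⟩
  | succ k IH =>
    intro s U hcard hUs hU2
    by_cases hUne : U.Nonempty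
    · -- strip a vertex of U
      obtain ⟨l, hl⟩ := hUne
      have hls : l ∈ s := hUs hl
      have hcard' : (s.erase l).card ≤ k := by
        rw [Finset.card_erase_of_mem hls]
        have : 1 ≤ s.card := Finset.card_pos.mpr ⟨l, hls⟩
        omega
      have hU's' : U.erase l ⊆ s.erase l := fun a ha => by
        rw [Finset.mem_erase] at ha ⊢
        exact ⟨ha.1, hUs ha.2⟩
      obtain ⟨X', hUX', hX's', hrem, hdeg2, hsum⟩ := IH (s.erase l) (U.erase l) hcard' hU's'
        (fun a ha b hb => hU2 a (Finset.mem_of_mem_erase ha) b (Finset.mem_of_mem_erase hb))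
      have hlX' : l ∉ X' := fun h => (Finset.notMem_erase l s) (hX's' h)
      have hsd : s \ insert l X' = s.erase l \ X' := by
        ext x
        simp only [Finset.mem_sdiff, Finset.mem_insert, Finset.mem_erase]
        tauto
      have hXU : insert l X' \ U = X' \ U.erase l := by
        ext x
        simp only [Finset.mem_sdiff, Finset.mem_insert, Finset.mem_erase]
        constructor
        · rintro ⟨(rfl | hx), hnU⟩
          · exact absurd hl hnU
          · exact ⟨hx, fun h => hnU h.2⟩
        · rintro ⟨hx, hnU'⟩
          have hxl : x ≠ l := fun h => (Finset.notMem_erase l s) (h ▸ hX's' hx)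
          exact ⟨Or.inr hx, fun h => hnU' ⟨hxl, h⟩⟩
      refine ⟨insert l X', ?_, ?_, ?_, ?_, ?_⟩
      · intro a ha
        rcases eq_or_ne a l with rfl | hne
        · exact Finset.mem_insert_self _ _
        · exact Finset.mem_insert_of_mem (hUX' (Finset.mem_erase.mpr ⟨hne, ha⟩))
      · exact Finset.insert_subset hls (hX's'.trans (Finset.erase_subset l s))
      · rw [hsd]; exact hrem
      · rw [hXU]
        intro x hx
        exact le_trans (hdeg2 x hx) (degIn_mono G (Finset.erase_subset l s) x)
      · rw [hXU, eIn_insert G hlX', sum_degIn_erase G (X' \ U.erase l) hls]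
        have hsplit : degIn G X' l = degIn G (U.erase l) l + degIn G (X' \ U.erase l) l := by
          rw [← degIn_union G Finset.disjoint_sdiff, Finset.union_sdiff_of_subset hUX']
        have hzero : degIn G (U.erase l) l = 0 := by
          rw [degIn, Finset.card_eq_zero, Finset.filter_eq_empty_iff]
          intro b hb
          exact hU2 l hl b (Finset.mem_of_mem_erase hb)
        omega
    · obtain rfl : U = ∅ := Finset.not_nonempty_iff_eq_empty.mp hUne
      by_cases hs : s.Nonempty
      swap
      · obtain rfl : s = ∅ := Finset.not_nonempty_iff_eq_empty.mp hs
        exact ⟨∅, by simp, by simp, by simp, by simp, by simp [eIn_empty]⟩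
      rcases Hf s hs with ⟨l, hls, hdl⟩ | hreg
      · -- leaf case
        have hcard' : (s.erase l).card ≤ k := by
          rw [Finset.card_erase_of_mem hls]
          have : 1 ≤ s.card := Finset.card_pos.mpr ⟨l, hls⟩
          omega
        obtain ⟨X', -, hX's', hrem, hdeg2, hsum⟩ :=
          IH (s.erase l) ∅ hcard' (Finset.empty_subset _) (by simp)
        simp only [Finset.sdiff_empty] at hdeg2 hsum
        have hlX' : l ∉ X' := fun h => (Finset.notMem_erase l s) (hX's' h)
        have hlsX' : l ∉ s.erase l \ X' := fun h =>
          (Finset.notMem_erase l s) (Finset.mem_sdiff.mp h).1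
        have hsX' : s \ X' = insert l (s.erase l \ X') := by
          ext x
          simp only [Finset.mem_sdiff, Finset.mem_insert, Finset.mem_erase]
          constructor
          · rintro ⟨hxs, hxX⟩
            rcases eq_or_ne x l with rfl | hne
            · exact Or.inl rfl
            · exact Or.inr ⟨⟨hne, hxs⟩, hxX⟩
          · rintro (rfl | ⟨⟨hne, hxs⟩, hxX⟩)
            · exact ⟨hls, hlX'⟩
            · exact ⟨hxs, hxX⟩
        have hT : (s.filter (fun y => G.Adj l y)).card ≤ 1 := hdl
        -- the common sum bound when X = X'
        have hsumX' : eIn G X' + 2 * X'.card ≤ ∑ x ∈ X', degIn G s x := by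
          rw [sum_degIn_erase G X' hls]
          omega
        have hdeg2s : ∀ x ∈ X', 2 ≤ degIn G s x := fun x hx =>
          le_trans (hdeg2 x hx) (degIn_mono G (Finset.erase_subset l s) x)
        by_cases hT0 : (s.filter (fun y => G.Adj l y)) = ∅
        · refine ⟨X', Finset.empty_subset _, hX's'.trans (Finset.erase_subset l s), ?_, ?_, ?_⟩
          · intro w hw
            rw [hsX'] at hw ⊢
            rcases Finset.mem_insert.mp hw with rfl | hw'
            · have : degIn G (insert w (s.erase w \ X')) w
                  = degIn G (s.erase w \ X') w + (if G.Adj w w then 1 else 0) :=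
                degIn_insert G hlsX' w
              rw [this]
              simp only [G.irrefl, if_false, add_zero]
              calc degIn G (s.erase w \ X') w ≤ degIn G s w := degIn_mono G
                    (le_trans Finset.sdiff_subset (Finset.erase_subset w s)) w
                _ = 0 := by rw [degIn, hT0, Finset.card_empty]
                _ ≤ 1 := Nat.zero_le _
            · rw [degIn_insert G hlsX' w]
              have : ¬ G.Adj w l := by
                intro hadj
                have : w ∈ s.filter (fun y => G.Adj l y) := by
                  rw [Finset.mem_filter]
                  exact ⟨(Finset.mem_erase.mp (Finset.mem_sdiff.mp hw').1).2, hadj.symm⟩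
                rw [hT0] at this
                exact absurd this (Finset.notMem_empty w)
              simp only [this, if_false, add_zero]
              exact hrem w hw'
          · simpa using hdeg2s
          · simpa using hsumX'
        · obtain ⟨p, hp⟩ : ∃ p, s.filter (fun y => G.Adj l y) = {p} :=
            Finset.card_eq_one.mp (le_antisymm hT
              (Finset.card_pos.mpr (Finset.nonempty_iff_ne_empty.mpr hT0)))
          have hpmem : p ∈ s ∧ G.Adj l p := by
            have := hp ▸ Finset.mem_singleton_self p
            exact Finset.mem_filter.mp this
          have hpl : p ≠ l := fun h => G.irrefl (h ▸ hpmem.2)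
          have hps' : p ∈ s.erase l := Finset.mem_erase.mpr ⟨hpl, hpmem.1⟩
          have hadjT : ∀ w, w ∈ s → G.Adj w l → w = p := by
            intro w hws hadj
            have : w ∈ s.filter (fun y => G.Adj l y) := Finset.mem_filter.mpr ⟨hws, hadj.symm⟩
            rw [hp] at this
            exact Finset.mem_singleton.mp this
          by_cases hpX : p ∈ X'
          · refine ⟨X', Finset.empty_subset _, hX's'.trans (Finset.erase_subset l s), ?_, ?_, ?_⟩
            · intro w hw
              rw [hsX'] at hw ⊢
              rcases Finset.mem_insert.mp hw with rfl | hw'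
              · -- w = l : every neighbour of l in s\X' would be p ∈ X'
                rw [degIn, Finset.card_eq_zero.mpr]
                · omega
                rw [Finset.filter_eq_empty_iff]
                intro y hy hadj
                have hyp : y = p := by
                  apply hadjT y _ hadj.symm
                  rcases Finset.mem_insert.mp hy with rfl | hy'
                  · exact hls
                  · exact (Finset.mem_erase.mp (Finset.mem_sdiff.mp hy').1).2
                subst hyp
                rcases Finset.mem_insert.mp hy with h | hy'
                · exact hpl h
                · exact (Finset.mem_sdiff.mp hy').2 hpX
              · rw [degIn_insert G hlsX' w]
                have : ¬ G.Adj w l := by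
                  intro hadj
                  have := hadjT w (Finset.mem_erase.mp (Finset.mem_sdiff.mp hw').1).2 hadj
                  subst this
                  exact (Finset.mem_sdiff.mp hw').2 hpX
                simp only [this, if_false, add_zero]
                exact hrem w hw'
            · simpa using hdeg2s
            · simpa using hsumX'
          · by_cases hr : degIn G (s.erase l \ X') p = 0
            · refine ⟨X', Finset.empty_subset _, hX's'.trans (Finset.erase_subset l s), ?_, ?_, ?_⟩
              · intro w hw
                rw [hsX'] at hw ⊢
                rcases Finset.mem_insert.mp hw with rfl | hw'
                · -- w = l
                  calc degIn G (insert w (s.erase w \ X')) w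
                      ≤ degIn G s w := degIn_mono G (by
                        rw [← hsX']; exact Finset.sdiff_subset) w
                    _ ≤ 1 := hT
                · rw [degIn_insert G hlsX' w]
                  rcases eq_or_ne w p with rfl | hwp
                  · have : degIn G (s.erase l \ X') w = 0 := hr
                    rw [this]
                    split <;> omega
                  · have : ¬ G.Adj w l := fun hadj => hwp (hadjT w
                      (Finset.mem_erase.mp (Finset.mem_sdiff.mp hw').1).2 hadj)
                    simp only [this, if_false, add_zero]
                    exact hrem w hw'
              · simpa using hdeg2s
              · simpa using hsumX'
            · -- add p to X
              obtain ⟨w0, hw0⟩ : ∃ w0, w0 ∈ (s.erase l \ X').filter (fun y => G.Adj p y) :=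
                Finset.card_pos.mp (Nat.pos_of_ne_zero hr)
              rw [Finset.mem_filter] at hw0
              have hw0l : w0 ≠ l := fun h =>
                (Finset.notMem_erase l s) (h ▸ (Finset.mem_sdiff.mp hw0.1).1)
              have hw0X' : w0 ∉ X' := (Finset.mem_sdiff.mp hw0.1).2
              have hw0s : w0 ∈ s := Finset.mem_of_mem_erase (Finset.mem_sdiff.mp hw0.1).1
              refine ⟨insert p X', Finset.empty_subset _,
                Finset.insert_subset hpmem.1 (hX's'.trans (Finset.erase_subset l s)), ?_, ?_, ?_⟩
              · intro w hw
                rw [Finset.mem_sdiff, Finset.mem_insert] at hw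
                push_neg at hw
                obtain ⟨hws, hwp, hwX'⟩ : w ∈ s ∧ ¬w = p ∧ w ∉ X' := ⟨hw.1, hw.2.1, hw.2.2⟩
                have hsub : s \ insert p X' ⊆ s \ X' := by
                  apply Finset.sdiff_subset_sdiff (le_refl s) (Finset.subset_insert p X')
                rcases eq_or_ne w l with rfl | hwl
                · -- only possible neighbour is p which is removed
                  rw [degIn, Finset.card_eq_zero.mpr]
                  · omega
                  rw [Finset.filter_eq_empty_iff]
                  intro y hy hadj
                  rw [Finset.mem_sdiff, Finset.mem_insert] at hy
                  push_neg at hy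
                  exact hy.2.1 (hadjT y hy.1 hadj.symm)
                · calc degIn G (s \ insert p X') w ≤ degIn G (s \ X') w := degIn_mono G hsub w
                    _ ≤ 1 := by
                        rw [hsX', degIn_insert G hlsX' w]
                        have : ¬ G.Adj w l := fun hadj => hwp (hadjT w hws hadj)
                        simp only [this, if_false, add_zero]
                        apply hrem w
                        rw [Finset.mem_sdiff, Finset.mem_erase]
                        exact ⟨⟨hwl, hws⟩, hwX'⟩
              · intro x hx
                rw [Finset.sdiff_empty] at hx
                rcases Finset.mem_insert.mp hx with rfl | hx'
                · -- degIn s p ≥ 2 : neighbours l and w0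
                  have hsub : {l, w0} ⊆ s.filter (fun y => G.Adj x y) := by
                    intro y hy
                    rcases Finset.mem_insert.mp hy with rfl | hy'
                    · exact Finset.mem_filter.mpr ⟨hls, hpmem.2.symm⟩
                    · rw [Finset.mem_singleton] at hy'
                      subst hy'
                      exact Finset.mem_filter.mpr ⟨hw0s, hw0.2⟩
                  calc 2 = ({l, w0} : Finset V).card := by
                        rw [Finset.card_insert_of_notMem (by simpa using hw0l.symm),
                          Finset.card_singleton]
                    _ ≤ degIn G s x := Finset.card_le_card hsub
                · exact hdeg2s x hx'
              · rw [Finset.sdiff_empty, eIn_insert G hpX, Finset.sum_insert hpX,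
                  Finset.card_insert_of_notMem hpX]
                have hkey : degIn G X' p + 2 ≤ degIn G s p := by
                  have hsub : X'.filter (fun y => G.Adj p y) ∪ {l, w0}
                      ⊆ s.filter (fun y => G.Adj p y) := by
                    intro y hy
                    rcases Finset.mem_union.mp hy with hy' | hy'
                    · rw [Finset.mem_filter] at hy' ⊢
                      exact ⟨(hX's'.trans (Finset.erase_subset l s)) hy'.1, hy'.2⟩
                    · rcases Finset.mem_insert.mp hy' with rfl | hy''
                      · exact Finset.mem_filter.mpr ⟨hls, hpmem.2.symm⟩
                      · rw [Finset.mem_singleton] at hy''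
                        subst hy''
                        exact Finset.mem_filter.mpr ⟨hw0s, hw0.2⟩
                  have hdisj : Disjoint (X'.filter (fun y => G.Adj p y)) ({l, w0} : Finset V) := by
                    rw [Finset.disjoint_left]
                    intro y hy hy'
                    have hyX : y ∈ X' := Finset.mem_of_mem_filter y hy
                    rcases Finset.mem_insert.mp hy' with rfl | hy''
                    · exact hlX' hyX
                    · rw [Finset.mem_singleton] at hy''
                      subst hy''
                      exact hw0X' hyX
                  have := Finset.card_le_card hsub
                  rw [Finset.card_union_of_disjoint hdisj] at this
                  have h2 : ({l, w0} : Finset V).card = 2 := by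
                    rw [Finset.card_insert_of_notMem (by simpa using hw0l.symm),
                      Finset.card_singleton]
                  rw [h2] at this
                  exact this
                have hsum2 : ∑ x ∈ X', degIn G s x
                    = (∑ x ∈ X', degIn G (s.erase l) x) + degIn G X' l :=
                  sum_degIn_erase G X' hls
                have hzero : degIn G X' l = 0 := by
                  rw [degIn, Finset.card_eq_zero, Finset.filter_eq_empty_iff]
                  intro y hy hadj
                  have hys : y ∈ s := (hX's'.trans (Finset.erase_subset l s)) hy
                  have := hadjT y hys hadj.symm
                  subst this
                  exact hpX hy
                omega
      · -- 2-regular case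
        obtain ⟨z, hz⟩ := hs
        have hcard' : (s.erase z).card ≤ k := by
          rw [Finset.card_erase_of_mem hz]
          have : 1 ≤ s.card := Finset.card_pos.mpr ⟨z, hz⟩
          omega
        obtain ⟨X', -, hX's', hrem, hdeg2, hsum⟩ :=
          IH (s.erase z) ∅ hcard' (Finset.empty_subset _) (by simp)
        simp only [Finset.sdiff_empty] at hdeg2 hsum
        have hzX' : z ∉ X' := fun h => (Finset.notMem_erase z s) (hX's' h)
        have hnadj : ∀ a ∈ X', ¬ G.Adj z a := by
          intro a ha hadj
          have has : a ∈ s := (hX's'.trans (Finset.erase_subset z s)) ha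
          have h2 : degIn G s a = 2 := hreg a has
          have h3 := degIn_erase G hz a
          rw [if_pos hadj.symm] at h3
          have h4 := hdeg2 a ha
          omega
        have hdzX' : degIn G X' z = 0 := by
          rw [degIn, Finset.card_eq_zero, Finset.filter_eq_empty_iff]
          exact hnadj
        have hsd : s \ insert z X' = s.erase z \ X' := by
          ext x
          simp only [Finset.mem_sdiff, Finset.mem_insert, Finset.mem_erase]
          tauto
        refine ⟨insert z X', Finset.empty_subset _,
          Finset.insert_subset hz (hX's'.trans (Finset.erase_subset z s)), ?_, ?_, ?_⟩
        · rw [hsd]; exact hrem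
        · intro x hx
          rw [Finset.sdiff_empty] at hx
          rcases Finset.mem_insert.mp hx with rfl | hx'
          · exact le_of_eq (hreg x hz).symm
          · exact le_trans (hdeg2 x hx') (degIn_mono G (Finset.erase_subset z s) x)
        · rw [Finset.sdiff_empty, eIn_insert G hzX', Finset.sum_insert hzX',
            Finset.card_insert_of_notMem hzX', hdzX']
          have hsum2 : ∑ x ∈ X', degIn G s x
              = (∑ x ∈ X', degIn G (s.erase z) x) + degIn G X' z :=
            sum_degIn_erase G X' hz
          have hdz : degIn G s z = 2 := hreg z hz
          omega

lemma forestOrReg (hconn : G.Connected) (hedge : (eFin G).card = Fintype.card V) :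
    ∀ t : Finset V, t.Nonempty → (∃ w ∈ t, degIn G t w ≤ 1) ∨ (∀ w ∈ t, degIn G t w = 2) := by
  intro t ht
  by_cases hL : ∃ w ∈ t, degIn G t w ≤ 1
  · exact Or.inl hL
  push_neg at hL
  right
  intro w hw
  by_contra hne
  have h3 : 3 ≤ degIn G t w := by have := hL w hw; omega
  have hhs := handshake G t
  have hsum : 2 * t.card < ∑ x ∈ t, degIn G t x := by
    calc 2 * t.card = ∑ _x ∈ t, 2 := by rw [Finset.sum_const, smul_eq_mul, mul_comm]
    _ < ∑ x ∈ t, degIn G t x :=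
        Finset.sum_lt_sum (fun i hi => by have := hL i hi; omega) ⟨w, hw, by omega⟩
  have heIn' : t.card + 1 ≤ ((eFin G).filter (fun e => ∀ x ∈ e, x ∈ t)).card := by
    have : t.card + 1 ≤ eIn G t := by omega
    exact this
  -- distance to t
  set D : V → ℕ := fun v => ((t.image (fun u => G.dist v u)).min' (ht.image _)) with hD
  have hDmem : ∀ v, ∃ u ∈ t, G.dist v u = D v := by
    intro v
    have := Finset.min'_mem (t.image (fun u => G.dist v u)) (ht.image _)
    rw [Finset.mem_image] at this
    obtain ⟨u, hu, he⟩ := this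
    exact ⟨u, hu, he⟩
  have hDle : ∀ v, ∀ u ∈ t, D v ≤ G.dist v u := fun v u hu =>
    Finset.min'_le _ _ (Finset.mem_image_of_mem _ hu)
  have hstep : ∀ v, ∃ x, v ∉ t → (G.Adj v x ∧ D x < D v) := by
    intro v
    by_cases hv : v ∈ t
    · exact ⟨v, fun h => absurd hv h⟩
    obtain ⟨u, hu, hdu⟩ := hDmem v
    have hreach : G.Reachable v u := hconn v u
    have hDpos : 0 < D v := by
      rcases Nat.eq_zero_or_pos (D v) with h0 | h
      · exfalso
        rw [h0] at hdu
        have : v = u := (hreach.dist_eq_zero_iff).mp hdu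
        exact hv (this ▸ hu)
      · exact h
    obtain ⟨p, hp⟩ := hreach.exists_walk_length_eq_dist
    cases p with
    | nil =>
      exfalso
      rw [Walk.length_nil] at hp
      omega
    | @cons _ b _ hadj q =>
      refine ⟨b, fun _ => ⟨hadj, ?_⟩⟩
      have h1 : G.dist b u ≤ q.length := SimpleGraph.dist_le q
      have hlen : q.length + 1 = G.dist v u := by
        rw [← hp, Walk.length_cons]
      have h2 := hDle b u hu
      omega
  choose f hf using hstep
  have hcard2 : (Finset.univ \ t).card ≤
      ((eFin G).filter (fun e => ¬ ∀ x ∈ e, x ∈ t)).card := by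
    apply Finset.card_le_card_of_injOn (fun v => s(v, f v))
    · intro v hv
      have hvt : v ∉ t := (Finset.mem_sdiff.mp hv).2
      have h := hf v hvt
      rw [Finset.mem_coe, Finset.mem_filter, mem_eFin, mem_edgeSet]
      refine ⟨h.1, ?_⟩
      intro hall
      exact hvt (hall v (by simp))
    · intro a ha b hb hab
      have hat : a ∉ t := (Finset.mem_sdiff.mp ha).2
      have hbt : b ∉ t := (Finset.mem_sdiff.mp hb).2
      have h1 := hf a hat
      have h2 := hf b hbt
      simp only [Sym2.eq_iff] at hab
      rcases hab with ⟨h, -⟩ | ⟨h1', h2'⟩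
      · exact h
      · exfalso
        have ha2 := h1.2
        have hb2 := h2.2
        rw [h2'] at ha2
        rw [← h1'] at hb2
        omega
  have hsplit := Finset.card_filter_add_card_filter_not
    (s := eFin G) (p := fun e => ∀ x ∈ e, x ∈ t)
  have hcompl : (Finset.univ \ t).card = Fintype.card V - t.card := by
    rw [Finset.card_sdiff_of_subset (Finset.subset_univ t), Finset.card_univ]
  have htcard : t.card ≤ Fintype.card V := by
    rw [← Finset.card_univ]
    exact Finset.card_le_card (Finset.subset_univ t)
  omega

/-- in a graph of max degree ≤ 1, reachability implies equality or adjacency -/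
lemma reach_aux {W : Type*} (H : SimpleGraph W) (hH : ∀ x, (H.neighborSet x).Subsingleton) :
    ∀ x y, H.Reachable x y → y = x ∨ H.Adj x y := by
  intro x y hr
  obtain ⟨p⟩ := hr
  induction p with
  | nil => exact Or.inl rfl
  | @cons a b c hadj q IH =>
    rcases IH with rfl | hbc
    · exact Or.inr hadj
    · exact Or.inl ((hH b hadj.symm hbc).symm)

lemma fiber_le_two {W : Type*} [Finite W] (H : SimpleGraph W)
    (hH : ∀ x, (H.neighborSet x).Subsingleton) (c : H.ConnectedComponent) :
    Nat.card {v : W // H.connectedComponentMk v = c} ≤ 2 := by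
  obtain ⟨x, rfl⟩ := c.exists_rep
  have key : ∀ y : {v : W // H.connectedComponentMk v = H.connectedComponentMk x},
      y.1 = x ∨ H.Adj x y.1 := by
    intro y
    have hr : H.Reachable x y.1 := (ConnectedComponent.exact y.2).symm
    exact reach_aux H hH x y.1 hr
  have hinj : Function.Injective
      (fun y : {v : W // H.connectedComponentMk v = H.connectedComponentMk x} =>
        (if y.1 = x then true else false)) := by
    intro y1 y2 hy
    simp only at hy
    by_cases h1 : y1.1 = x
    · rw [if_pos h1] at hy
      by_cases h2 : y2.1 = x
      · exact Subtype.ext (h1.trans h2.symm)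
      · rw [if_neg h2] at hy; exact absurd hy.symm (by simp)
    · rw [if_neg h1] at hy
      by_cases h2 : y2.1 = x
      · rw [if_pos h2] at hy; exact absurd hy (by simp)
      · rw [if_neg h2] at hy
        have ha1 : H.Adj x y1.1 := (key y1).resolve_left h1
        have ha2 : H.Adj x y2.1 := (key y2).resolve_left h2
        exact Subtype.ext (hH x ha1 ha2)
  calc Nat.card {v : W // H.connectedComponentMk v = H.connectedComponentMk x}
      ≤ Nat.card Bool := Nat.card_le_card_of_injective _ hinj
    _ = 2 := by rw [Nat.card_eq_fintype_card, Fintype.card_bool]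

lemma comps_card {W : Type*} [Fintype W] (H : SimpleGraph W)
    (hH : ∀ x, (H.neighborSet x).Subsingleton) :
    Fintype.card W ≤ Nat.card H.ConnectedComponent + Nat.card H.edgeSet := by
  rcases isEmpty_or_nonempty W with hW | hW
  · simp
  letI : Fintype H.ConnectedComponent := Fintype.ofFinite _
  have hfib : ∀ c : H.ConnectedComponent,
      Fintype.card {v // H.connectedComponentMk v = c} ≤ 2 := by
    intro c
    have := fiber_le_two H hH c
    rwa [Nat.card_eq_fintype_card] at this
  have hfib1 : ∀ c : H.ConnectedComponent,
      1 ≤ Fintype.card {v // H.connectedComponentMk v = c} := by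
    intro c
    obtain ⟨x, hx⟩ := c.exists_rep
    exact Fintype.card_pos_iff.mpr ⟨⟨x, hx⟩⟩
  have htot : Fintype.card W
      = ∑ c : H.ConnectedComponent, Fintype.card {v // H.connectedComponentMk v = c} := by
    rw [← Fintype.card_sigma]
    exact (Fintype.card_congr (Equiv.sigmaFiberEquiv H.connectedComponentMk)).symm
  set B := Finset.univ.filter (fun c : H.ConnectedComponent =>
    2 ≤ Fintype.card {v // H.connectedComponentMk v = c}) with hB
  have hsum : Fintype.card W ≤ Fintype.card H.ConnectedComponent + B.card := by
    rw [htot]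
    calc ∑ c : H.ConnectedComponent, Fintype.card {v // H.connectedComponentMk v = c}
        ≤ ∑ c : H.ConnectedComponent, (1 + if 2 ≤ Fintype.card {v // H.connectedComponentMk v = c} then 1 else 0) := by
          apply Finset.sum_le_sum
          intro c _
          have h1 := hfib c
          have h2 := hfib1 c
          split <;> omega
      _ = Fintype.card H.ConnectedComponent + B.card := by
          rw [Finset.sum_add_distrib, Finset.sum_const, Finset.card_univ, smul_eq_mul, mul_one]
          rw [hB, Finset.card_filter]
  have hBedge : B.card ≤ Nat.card H.edgeSet := by
    rw [Nat.card_eq_fintype_card, ← SimpleGraph.edgeFinset_card]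
    have hex : ∀ c : H.ConnectedComponent, ∃ e : Sym2 W, c ∈ B →
        (e ∈ H.edgeSet ∧ ∀ x ∈ e, H.connectedComponentMk x = c) := by
      intro c
      by_cases hc : c ∈ B
      swap
      · exact ⟨s(Classical.arbitrary W, Classical.arbitrary W), fun h => absurd h hc⟩
      have h2 : 2 ≤ Fintype.card {v // H.connectedComponentMk v = c} :=
        (Finset.mem_filter.mp hc).2
      haveI : Nontrivial {v // H.connectedComponentMk v = c} :=
        Fintype.one_lt_card_iff_nontrivial.mp h2
      obtain ⟨y, z, hyz⟩ := exists_pair_ne {v // H.connectedComponentMk v = c}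
      have hadj : H.Adj y.1 z.1 := by
        have hr : H.Reachable y.1 z.1 := ConnectedComponent.exact (y.2.trans z.2.symm)
        rcases reach_aux H hH y.1 z.1 hr with heq | hadj
        · exact absurd (Subtype.ext heq.symm) hyz
        · exact hadj
      refine ⟨s(y.1, z.1), fun _ => ⟨hadj, ?_⟩⟩
      intro x hx
      rcases Sym2.mem_iff.mp hx with rfl | rfl
      · exact y.2
      · exact z.2
    choose g hg using hex
    apply Finset.card_le_card_of_injOn g
    · intro c hc
      rw [Finset.mem_coe, mem_edgeFinset]
      exact (hg c hc).1
    · intro c1 hc1 c2 hc2 hgc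
      have h1 := hg c1 hc1
      have h2 := hg c2 hc2
      obtain ⟨a, ha⟩ : ∃ a, a ∈ g c1 := by
        induction g c1 with
        | _ x y => exact ⟨x, by simp⟩
      have e1 := h1.2 a ha
      have e2 := h2.2 a (hgc ▸ ha)
      exact e1.symm.trans e2
  have hc : Nat.card H.ConnectedComponent = Fintype.card H.ConnectedComponent :=
    Nat.card_eq_fintype_card
  omega

/-- neighbours in `G.delVerts X` are subsingleton, given the degIn condition -/
lemma nbhd_subsingleton (X : Finset V)
    (hX : ∀ w ∈ Finset.univ \ X, degIn G (Finset.univ \ X) w ≤ 1) :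
    ∀ x : {v : V // v ∉ X}, ((G.delVerts X).neighborSet x).Subsingleton := by
  intro x y1 hy1 y2 hy2
  have h1 : G.Adj x.1 y1.1 := hy1
  have h2 : G.Adj x.1 y2.1 := hy2
  by_contra hne
  have hne' : y1.1 ≠ y2.1 := fun h => hne (Subtype.ext h)
  have hsub : ({y1.1, y2.1} : Finset V) ⊆ (Finset.univ \ X).filter (fun y => G.Adj x.1 y) := by
    intro y hy
    rcases Finset.mem_insert.mp hy with rfl | hy'
    · exact Finset.mem_filter.mpr ⟨Finset.mem_sdiff.mpr ⟨Finset.mem_univ _, y1.2⟩, h1⟩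
    · rw [Finset.mem_singleton] at hy'
      subst hy'
      exact Finset.mem_filter.mpr ⟨Finset.mem_sdiff.mpr ⟨Finset.mem_univ _, y2.2⟩, h2⟩
  have hcard := Finset.card_le_card hsub
  rw [Finset.card_pair hne'] at hcard
  have := hX x.1 (Finset.mem_sdiff.mpr ⟨Finset.mem_univ _, x.2⟩)
  rw [degIn] at this
  omega

/-- edges of `G.delVerts X` inject into edges of `G` inside the complement -/
lemma edge_le (X : Finset V) :
    Nat.card (G.delVerts X).edgeSet ≤ eIn G (Finset.univ \ X) := by
  rw [Nat.card_eq_fintype_card, ← SimpleGraph.edgeFinset_card]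
  apply Finset.card_le_card_of_injOn (fun e => Sym2.map Subtype.val e)
  · intro e he
    rw [Finset.mem_coe, mem_edgeFinset] at he
    induction e with
    | _ a b =>
      rw [mem_edgeSet] at he
      beta_reduce; rw [Finset.mem_coe, Sym2.map_pair_eq, Finset.mem_filter, mem_eFin, mem_edgeSet]
      refine ⟨he, ?_⟩
      intro y hy
      rcases Sym2.mem_iff.mp hy with rfl | rfl
      · exact Finset.mem_sdiff.mpr ⟨Finset.mem_univ _, a.2⟩
      · exact Finset.mem_sdiff.mpr ⟨Finset.mem_univ _, b.2⟩
  · exact Set.injOn_of_injective (Sym2.map.injective Subtype.val_injective)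

/-- the key edge-degree double count -/
lemma cross_identity (X : Finset V) :
    eIn G (Finset.univ \ X) + ∑ x ∈ X, degIn G Finset.univ x
      = (eFin G).card + eIn G X := by
  have hXu : X ∪ (Finset.univ \ X) = Finset.univ :=
    Finset.union_sdiff_of_subset (Finset.subset_univ X)
  have h1 : ∀ w, degIn G Finset.univ w = degIn G X w + degIn G (Finset.univ \ X) w := by
    intro w
    rw [← degIn_union G Finset.disjoint_sdiff, hXu]
  have hsplit : (∑ x ∈ Finset.univ \ X, degIn G Finset.univ x)
      + ∑ x ∈ X, degIn G Finset.univ x = ∑ x : V, degIn G Finset.univ x :=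
    Finset.sum_sdiff (Finset.subset_univ X)
  have huniv : eIn G Finset.univ = (eFin G).card := by
    rw [eIn, Finset.filter_true_of_mem]
    intro e _ x _
    exact Finset.mem_univ x
  have hh0 : ∑ x : V, degIn G Finset.univ x = 2 * (eFin G).card := by
    rw [handshake, huniv]
  have hhX : ∑ x ∈ X, degIn G X x = 2 * eIn G X := handshake G X
  have hhC : ∑ x ∈ Finset.univ \ X, degIn G (Finset.univ \ X) x
      = 2 * eIn G (Finset.univ \ X) := handshake G _
  have hcross : ∑ x ∈ X, degIn G (Finset.univ \ X) x
      = ∑ x ∈ Finset.univ \ X, degIn G X x := sum_comm' G _ _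
  have e1 : ∑ x ∈ X, degIn G Finset.univ x
      = 2 * eIn G X + ∑ x ∈ X, degIn G (Finset.univ \ X) x := by
    rw [Finset.sum_congr rfl (fun x _ => h1 x), Finset.sum_add_distrib, hhX]
  have e2 : ∑ x ∈ Finset.univ \ X, degIn G Finset.univ x
      = ∑ x ∈ Finset.univ \ X, degIn G X x + 2 * eIn G (Finset.univ \ X) := by
    rw [Finset.sum_congr rfl (fun x _ => h1 x), Finset.sum_add_distrib, hhC]
  omega

lemma deg_eq_degIn (w : V) : G.deg w = degIn G Finset.univ w := by
  rw [SimpleGraph.deg, Nat.card_eq_fintype_card]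
  exact Fintype.card_of_subtype _ (by simp)

lemma eFin_card : (eFin G).card = Nat.card G.edgeSet := by
  rw [eFin, ← Set.ncard_eq_toFinset_card _ (G.edgeSet.toFinite), Nat.card_coe_set_eq]

lemma card_compl' (X : Finset V) :
    Fintype.card {v : V // v ∉ X} = Fintype.card V - X.card := by
  have h1 : Fintype.card {v : V // v ∈ X} = X.card :=
    Fintype.card_of_subtype X (fun x => Iff.rfl)
  have := Fintype.card_subtype_compl (fun v : V => v ∈ X)
  rw [h1] at this
  exact this

end TenAux

end Aux

open TenAux in
theorem unicyclic_nonadjacent_degree_three (n : ℕ) (G : SimpleGraph (Fin n))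
    (hG : G.Unicyclic)
    (h : ∃ u v, u ≠ v ∧ ¬ G.Adj u v ∧ G.deg u = 3 ∧ G.deg v = 3) :
    G.tenacity ≤ 1 := by
  classical
  obtain ⟨hconn, hedge⟩ := hG
  obtain ⟨u, v, huv, hnadj, hdu, hdv⟩ := h
  have hdu' : degIn G Finset.univ u = 3 := by rw [← deg_eq_degIn]; exact hdu
  have hdv' : degIn G Finset.univ v = 3 := by rw [← deg_eq_degIn]; exact hdv
  have hedge' : (eFin G).card = Fintype.card (Fin n) := by rw [eFin_card]; exact hedge
  have Hf := forestOrReg G hconn hedge'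
  have hU2 : ∀ a ∈ ({u, v} : Finset (Fin n)), ∀ b ∈ ({u, v} : Finset (Fin n)), ¬ G.Adj a b := by
    intro a ha b hb hadj
    simp only [Finset.mem_insert, Finset.mem_singleton] at ha hb
    rcases ha with rfl | rfl <;> rcases hb with rfl | rfl
    · exact G.irrefl hadj
    · exact hnadj hadj
    · exact hnadj hadj.symm
    · exact G.irrefl hadj
  obtain ⟨X, hUX, -, hrem, -, hsum⟩ :=
    main G Hf Finset.univ.card Finset.univ {u, v} le_rfl (Finset.subset_univ _) hU2
  have hXsum : 2 * X.card + 2 + eIn G X ≤ ∑ x ∈ X, degIn G Finset.univ x := by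
    have h6 : ∑ x ∈ ({u, v} : Finset (Fin n)), degIn G Finset.univ x = 6 := by
      rw [Finset.sum_pair huv, hdu', hdv']
    have hsd : (∑ x ∈ X \ {u, v}, degIn G Finset.univ x)
        + ∑ x ∈ ({u, v} : Finset (Fin n)), degIn G Finset.univ x
        = ∑ x ∈ X, degIn G Finset.univ x := Finset.sum_sdiff hUX
    have hc2 : ({u, v} : Finset (Fin n)).card = 2 := Finset.card_pair huv
    have hcs : (X \ {u, v}).card = X.card - 2 := by rw [Finset.card_sdiff_of_subset hUX, hc2]
    have hcle : 2 ≤ X.card := hc2 ▸ Finset.card_le_card hUX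
    omega
  have hsub := nbhd_subsingleton G X hrem
  have hcomps := comps_card (G.delVerts X) hsub
  have hcompl : Fintype.card {v : Fin n // v ∉ X} = Fintype.card (Fin n) - X.card :=
    card_compl' X
  have hXle : X.card ≤ Fintype.card (Fin n) := by
    rw [← Finset.card_univ]
    exact Finset.card_le_card (Finset.subset_univ X)
  have hedgeH := edge_le G X
  have hcross := cross_identity G X
  have homega : X.card + 2 ≤ (G.delVerts X).omegaComp := by
    rw [SimpleGraph.omegaComp]
    omega
  have hcut : G.IsVertexCut X := by rw [SimpleGraph.IsVertexCut]; omega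
  have htau : (G.delVerts X).tauMax ≤ 2 := by
    have hne : Nonempty (G.delVerts X).ConnectedComponent := by
      have h0 : 0 < (G.delVerts X).omegaComp := by omega
      rw [SimpleGraph.omegaComp] at h0
      exact (Nat.card_pos_iff.mp h0).1
    rw [SimpleGraph.tauMax]
    apply csSup_le (Set.range_nonempty _)
    rintro _ ⟨c, rfl⟩
    exact fiber_le_two _ hsub c
  have hval : ((X.card : ℝ) + (G.delVerts X).tauMax) / (G.delVerts X).omegaComp ≤ 1 := by
    rw [div_le_one]
    · have hle : (X.card + (G.delVerts X).tauMax : ℕ) ≤ (G.delVerts X).omegaComp := by omega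
      exact_mod_cast hle
    · have h0 : (0 : ℕ) < (G.delVerts X).omegaComp := by omega
      exact_mod_cast h0
  refine le_trans (csInf_le ?_ ?_) hval
  · refine ⟨0, ?_⟩
    rintro t ⟨Y, hY, rfl⟩
    positivity
  · exact ⟨X, hcut, rfl⟩
end
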